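/- arXiv:1910.05713 — 6 statements merged into one kernel-verified Lean document; each statement's English description precedes it below -/
import Mathlib

section
/- The cumulative distribution function of the main channel gain H_B satisfies, for every h with v_min ≤ h ≤ v_max, Pr(H_B ≤ h) = ((m+3)Ξ₁/2) · (v_min^{−2/(m+3)} − h^{−2/(m+3)}). -/
open MeasureTheory ProbabilityTheory Metric Set

/-- The CDF of the main channel gain `H_B = c(‖U‖² + l²)^{-(m+3)/2}` satisfies
`Pr(H_B ≤ h) = ((m+3)Ξ₁/2)·(v_min^{-2/(m+3)} − h^{-2/(m+3)})` for `v_min ≤ h ≤ v_max`. -/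
theorem cdf_main_channel_gain
    (D l m c : ℝ) (hD : 0 < D) (hl : 0 < l) (hm : 0 < m) (hc : 0 < c)
    (vmin vmax Ξ₁ : ℝ)
    (hvmin : vmin = c * (D ^ 2 + l ^ 2) ^ (-(m + 3) / 2))
    (hvmax : vmax = c * l ^ (-(m + 3)))
    (hΞ₁ : Ξ₁ = 2 / ((m + 3) * D ^ 2) * c ^ (2 / (m + 3)))
    {Ω : Type*} [MeasureSpace Ω] [IsProbabilityMeasure (ℙ : Measure Ω)]
    (U : Ω → EuclideanSpace ℝ (Fin 2)) (hU : Measurable U)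
    (hlaw : Measure.map U (ℙ : Measure Ω) =
      (volume (Metric.closedBall (0 : EuclideanSpace ℝ (Fin 2)) D))⁻¹ •
        volume.restrict (Metric.closedBall (0 : EuclideanSpace ℝ (Fin 2)) D))
    (h : ℝ) (h1 : vmin ≤ h) (h2 : h ≤ vmax) :
    (ℙ : Measure Ω) {ω | c * (‖U ω‖ ^ 2 + l ^ 2) ^ (-(m + 3) / 2) ≤ h} =
      ENNReal.ofReal
        ((m + 3) * Ξ₁ / 2 * (vmin ^ (-2 / (m + 3)) - h ^ (-2 / (m + 3)))) := by
  have hm3 : (0:ℝ) < m + 3 := by linarith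
  have hvminpos : 0 < vmin := by rw [hvmin]; positivity
  have hh : 0 < h := lt_of_lt_of_le hvminpos h1
  set K : ℝ := (c / h) ^ (2 / (m + 3)) with hK
  have hKpos : 0 < K := by positivity
  have hlK : l ^ 2 ≤ K := by
    have hch : l ^ (m + 3) ≤ c / h := by
      rw [hvmax] at h2
      rw [le_div_iff₀ hh]
      calc l ^ (m + 3) * h ≤ l ^ (m + 3) * (c * l ^ (-(m + 3))) :=
            mul_le_mul_of_nonneg_left h2 (by positivity)
        _ = c := by
            rw [← mul_assoc, mul_comm _ c, mul_assoc, ← Real.rpow_add hl,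
              show m + 3 + -(m + 3) = (0:ℝ) by ring, Real.rpow_zero, mul_one]
    calc l ^ 2 = (l ^ (m + 3)) ^ (2 / (m + 3)) := by
          rw [← Real.rpow_natCast l 2, ← Real.rpow_mul hl.le]
          congr 1
          field_simp
          norm_num
      _ ≤ K := Real.rpow_le_rpow (by positivity) hch (by positivity)
  have hKD : K ≤ D ^ 2 + l ^ 2 := by
    have hx : (0:ℝ) < D ^ 2 + l ^ 2 := by positivity
    have hch : c / h ≤ (D ^ 2 + l ^ 2) ^ ((m + 3) / 2) := by
      rw [div_le_iff₀ hh]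
      rw [hvmin] at h1
      calc c = (D ^ 2 + l ^ 2) ^ ((m + 3) / 2) * (c * (D ^ 2 + l ^ 2) ^ (-(m + 3) / 2)) := by
            rw [← mul_assoc, mul_comm _ c, mul_assoc, ← Real.rpow_add hx,
              show (m + 3) / 2 + -(m + 3) / 2 = (0:ℝ) by ring, Real.rpow_zero, mul_one]
        _ ≤ (D ^ 2 + l ^ 2) ^ ((m + 3) / 2) * h :=
            mul_le_mul_of_nonneg_left h1 (by positivity)
    calc K ≤ ((D ^ 2 + l ^ 2) ^ ((m + 3) / 2)) ^ (2 / (m + 3)) :=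
          Real.rpow_le_rpow (by positivity) hch (by positivity)
      _ = D ^ 2 + l ^ 2 := by
          rw [← Real.rpow_mul hx.le,
            show (m + 3) / 2 * (2 / (m + 3)) = 1 by field_simp, Real.rpow_one]
  set R : ℝ := Real.sqrt (K - l ^ 2) with hR
  have hR0 : 0 ≤ R := Real.sqrt_nonneg _
  have hRD : R ≤ D := by
    rw [hR, show D = Real.sqrt (D ^ 2) by rw [Real.sqrt_sq hD.le]]
    exact Real.sqrt_le_sqrt (by linarith)
  have hRsq : R ^ 2 = K - l ^ 2 := Real.sq_sqrt (by linarith)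
  -- pointwise equivalence
  have key : ∀ t : ℝ, 0 ≤ t → (c * (t ^ 2 + l ^ 2) ^ (-(m + 3) / 2) ≤ h ↔ R ≤ t) := by
    intro t ht
    have hx : (0:ℝ) < t ^ 2 + l ^ 2 := by positivity
    rw [show -(m + 3) / 2 = -((m + 3) / 2) by ring, Real.rpow_neg hx.le,
      ← div_eq_mul_inv, div_le_iff₀' (by positivity), ← div_le_iff₀ hh,
      ← Real.rpow_inv_le_iff_of_pos (by positivity) hx.le (by positivity : (0:ℝ) < (m + 3) / 2),
      show ((m + 3) / 2)⁻¹ = 2 / (m + 3) by rw [inv_div], ← hK]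
    constructor
    · intro hKx
      calc R = Real.sqrt (K - l ^ 2) := hR
        _ ≤ Real.sqrt (t ^ 2) := Real.sqrt_le_sqrt (by linarith)
        _ = t := Real.sqrt_sq ht
    · intro hRt
      have := pow_le_pow_left₀ hR0 hRt 2
      rw [hRsq] at this
      linarith
  -- rewrite the event
  have hset : {ω | c * (‖U ω‖ ^ 2 + l ^ 2) ^ (-(m + 3) / 2) ≤ h}
      = U ⁻¹' {x : EuclideanSpace ℝ (Fin 2) | R ≤ ‖x‖} := by
    ext ω
    simp only [Set.mem_setOf_eq, Set.mem_preimage]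
    exact key _ (norm_nonneg _)
  have hAmeas : MeasurableSet {x : EuclideanSpace ℝ (Fin 2) | R ≤ ‖x‖} :=
    measurableSet_le measurable_const measurable_norm
  have hinter : {x : EuclideanSpace ℝ (Fin 2) | R ≤ ‖x‖} ∩ closedBall 0 D
      = closedBall (0 : EuclideanSpace ℝ (Fin 2)) D \ ball 0 R := by
    ext x
    simp only [Set.mem_inter_iff, Set.mem_setOf_eq, Set.mem_diff, Metric.mem_closedBall,
      Metric.mem_ball, dist_zero_right, not_lt]
    tauto
  have vol_cb : ∀ r : ℝ, 0 ≤ r →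
      volume (closedBall (0 : EuclideanSpace ℝ (Fin 2)) r) = ENNReal.ofReal (r ^ 2 * Real.pi) := by
    intro r hr
    rw [EuclideanSpace.volume_closedBall]
    simp only [Fintype.card_fin]
    rw [show ((2:ℕ):ℝ) / 2 + 1 = 2 by norm_num, Real.Gamma_two,
      Real.sq_sqrt Real.pi_nonneg, div_one, ← ENNReal.ofReal_pow hr,
      ← ENNReal.ofReal_mul (by positivity)]
  have vol_b : volume (ball (0 : EuclideanSpace ℝ (Fin 2)) R) = ENNReal.ofReal (R ^ 2 * Real.pi) := by
    rw [EuclideanSpace.volume_ball]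
    simp only [Fintype.card_fin]
    rw [show ((2:ℕ):ℝ) / 2 + 1 = 2 by norm_num, Real.Gamma_two,
      Real.sq_sqrt Real.pi_nonneg, div_one, ← ENNReal.ofReal_pow hR0,
      ← ENNReal.ofReal_mul (by positivity)]
  have hdiff : volume (closedBall (0 : EuclideanSpace ℝ (Fin 2)) D \ ball 0 R)
      = ENNReal.ofReal ((D ^ 2 * Real.pi - R ^ 2 * Real.pi)) := by
    rw [measure_diff (ball_subset_closedBall.trans (closedBall_subset_closedBall hRD))
      measurableSet_ball.nullMeasurableSet (by rw [vol_b]; exact ENNReal.ofReal_ne_top),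
      vol_cb D hD.le, vol_b, ← ENNReal.ofReal_sub _ (by positivity)]
  rw [hset, ← Measure.map_apply hU hAmeas, hlaw, Measure.smul_apply,
    Measure.restrict_apply hAmeas, hinter, hdiff, vol_cb D hD.le, smul_eq_mul,
    ← ENNReal.div_eq_inv_mul, ← ENNReal.ofReal_div_of_pos (by positivity)]
  congr 1
  -- the real computation
  have e1 : vmin ^ (-2 / (m + 3)) = c ^ (-2 / (m + 3)) * (D ^ 2 + l ^ 2) := by
    rw [hvmin, Real.mul_rpow hc.le (by positivity), ← Real.rpow_mul (by positivity),
      show -(m + 3) / 2 * (-2 / (m + 3)) = 1 by field_simp, Real.rpow_one]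
  have e2 : c ^ (2 / (m + 3)) * h ^ (-2 / (m + 3)) = K := by
    have hneg : h ^ (-2 / (m + 3)) = (h ^ (2 / (m + 3)))⁻¹ := by
      rw [← Real.rpow_neg hh.le, neg_div]
    rw [hneg, ← div_eq_mul_inv, hK, Real.div_rpow hc.le hh.le]
  have hcc : c ^ (-2 / (m + 3)) = (c ^ (2 / (m + 3)))⁻¹ := by
    rw [← Real.rpow_neg hc.le, neg_div]
  have ha : (0:ℝ) < c ^ (2 / (m + 3)) := by positivity
  rw [hΞ₁, e1, hcc, hRsq, ← e2]
  have hπ : (0:ℝ) < Real.pi := Real.pi_pos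
  field_simp
  ring
end

section
/- The cumulative distribution function of the eavesdropping channel gain H_E satisfies, for every h with v_min ≤ h ≤ v_mid, Pr(H_E ≤ h) = ((m+3)Ξ₂/2) · (v_min^{−2/(m+3)} − h^{−2/(m+3)}). -/
open MeasureTheory ProbabilityTheory Metric Set

set_option maxHeartbeats 1000000

lemma euclidean_volume_ball2 (r : ℝ) (hr : 0 ≤ r) :
    volume (Metric.ball (0 : EuclideanSpace ℝ (Fin 2)) r) = ENNReal.ofReal (Real.pi * r ^ 2) := by
  rw [EuclideanSpace.volume_ball]
  simp only [Fintype.card_fin]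
  rw [show ((2:ℕ) : ℝ) / 2 + 1 = 2 by norm_num, Real.Gamma_two,
    Real.sq_sqrt Real.pi_nonneg, div_one, ← ENNReal.ofReal_pow hr,
    ← ENNReal.ofReal_mul (by positivity), mul_comm]

lemma euclidean_volume_closedBall2 (r : ℝ) (hr : 0 ≤ r) :
    volume (Metric.closedBall (0 : EuclideanSpace ℝ (Fin 2)) r) =
      ENNReal.ofReal (Real.pi * r ^ 2) := by
  rw [MeasureTheory.Measure.addHaar_closedBall_eq_addHaar_ball]
  exact euclidean_volume_ball2 r hr

/-- The CDF of the eavesdropping channel gain `H_E = c(‖W‖² + l²)^{-(m+3)/2}` satisfies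
`Pr(H_E ≤ h) = ((m+3)Ξ₂/2)·(v_min^{-2/(m+3)} − h^{-2/(m+3)})` for `v_min ≤ h ≤ v_mid`. -/
theorem cdf_eavesdropping_channel_gain
    (D ρ l m c : ℝ) (hD : 0 < D) (hρ0 : 0 ≤ ρ) (hρD : ρ < D) (hl : 0 < l) (hm : 0 < m)
    (hc : 0 < c)
    (vmin vmid Ξ₂ : ℝ)
    (hvmin : vmin = c * (D ^ 2 + l ^ 2) ^ (-(m + 3) / 2))
    (hvmid : vmid = c * (ρ ^ 2 + l ^ 2) ^ (-(m + 3) / 2))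
    (hΞ₂ : Ξ₂ = 2 / ((m + 3) * (D ^ 2 - ρ ^ 2)) * c ^ (2 / (m + 3)))
    {Ω : Type*} [MeasureSpace Ω] [IsProbabilityMeasure (ℙ : Measure Ω)]
    (W : Ω → EuclideanSpace ℝ (Fin 2)) (hW : Measurable W)
    (hlaw : Measure.map W (ℙ : Measure Ω) =
      (volume (Metric.closedBall (0 : EuclideanSpace ℝ (Fin 2)) D \
          Metric.ball (0 : EuclideanSpace ℝ (Fin 2)) ρ))⁻¹ •
        volume.restrict (Metric.closedBall (0 : EuclideanSpace ℝ (Fin 2)) D \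
          Metric.ball (0 : EuclideanSpace ℝ (Fin 2)) ρ))
    (h : ℝ) (h1 : vmin ≤ h) (h2 : h ≤ vmid) :
    (ℙ : Measure Ω) {ω | c * (‖W ω‖ ^ 2 + l ^ 2) ^ (-(m + 3) / 2) ≤ h} =
      ENNReal.ofReal
        ((m + 3) * Ξ₂ / 2 * (vmin ^ (-2 / (m + 3)) - h ^ (-2 / (m + 3)))) := by
  have hm3 : (0:ℝ) < m + 3 := by linarith
  have hne : m + 3 ≠ 0 := hm3.ne'
  have hh0 : 0 < h := lt_of_lt_of_le (by rw [hvmin]; positivity) h1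
  set q : ℝ := 2 / (m + 3) with hq
  have hq0 : 0 < q := by positivity
  set t : ℝ := (c / h) ^ q with ht
  have pow_t : ∀ a : ℝ, 0 < a → (a ^ ((m + 3) / 2)) ^ q = a := by
    intro a ha
    rw [← Real.rpow_mul ha.le, show (m + 3) / 2 * q = 1 by rw [hq]; field_simp, Real.rpow_one]
  have key : ∀ a : ℝ, 0 < a → (c * a ^ (-(m + 3) / 2) ≤ h ↔ t ≤ a) := by
    intro a ha
    have hap : 0 < a ^ ((m + 3) / 2) := Real.rpow_pos_of_pos ha _
    rw [show -(m + 3) / 2 = -((m + 3) / 2) by ring, Real.rpow_neg ha.le,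
      mul_inv_le_iff₀ hap, ← div_le_iff₀' hh0,
      ← Real.rpow_le_rpow_iff (by positivity) hap.le hq0, ht]
    rw [pow_t a ha]
  have key2 : ∀ a : ℝ, 0 < a → (h ≤ c * a ^ (-(m + 3) / 2) ↔ a ≤ t) := by
    intro a ha
    have hap : 0 < a ^ ((m + 3) / 2) := Real.rpow_pos_of_pos ha _
    rw [show -(m + 3) / 2 = -((m + 3) / 2) by ring, Real.rpow_neg ha.le,
      le_mul_inv_iff₀ hap, ← le_div_iff₀' hh0,
      ← Real.rpow_le_rpow_iff hap.le (by positivity) hq0, ht]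
    rw [pow_t a ha]
  have htD : t ≤ D ^ 2 + l ^ 2 := (key _ (by positivity)).mp (hvmin ▸ h1)
  have htρ : ρ ^ 2 + l ^ 2 ≤ t := (key2 _ (by positivity)).mp (hvmid ▸ h2)
  set r : ℝ := Real.sqrt (t - l ^ 2) with hr
  have hrl : 0 ≤ t - l ^ 2 := by nlinarith
  have hr2 : r ^ 2 = t - l ^ 2 := Real.sq_sqrt hrl
  have hρr : ρ ≤ r := by
    rw [hr]
    exact (Real.le_sqrt hρ0 hrl).mpr (by nlinarith)
  have hrD : r ≤ D := by
    rw [hr]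
    exact (Real.sqrt_le_sqrt (by nlinarith : t - l ^ 2 ≤ D ^ 2)).trans_eq
      (Real.sqrt_sq hD.le)
  have hr0 : 0 ≤ r := Real.sqrt_nonneg _
  have hset : {ω | c * (‖W ω‖ ^ 2 + l ^ 2) ^ (-(m + 3) / 2) ≤ h} =
      W ⁻¹' (Metric.ball (0 : EuclideanSpace ℝ (Fin 2)) r)ᶜ := by
    ext ω
    simp only [mem_setOf_eq, mem_preimage, mem_compl_iff, mem_ball,
      dist_zero_right, not_lt]
    rw [key _ (by positivity), hr]
    constructor
    · intro hle
      calc Real.sqrt (t - l ^ 2) ≤ Real.sqrt (‖W ω‖ ^ 2) :=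
            Real.sqrt_le_sqrt (by linarith)
        _ = ‖W ω‖ := Real.sqrt_sq (norm_nonneg _)
    · intro hle
      have h' := pow_le_pow_left₀ (Real.sqrt_nonneg (t - l ^ 2)) hle 2
      rw [Real.sq_sqrt hrl] at h'
      linarith
  rw [hset, ← Measure.map_apply hW (measurableSet_ball.compl), hlaw]
  set S := Metric.closedBall (0 : EuclideanSpace ℝ (Fin 2)) D \
      Metric.ball (0 : EuclideanSpace ℝ (Fin 2)) ρ with hS
  have hinter : (Metric.ball (0 : EuclideanSpace ℝ (Fin 2)) r)ᶜ ∩ S =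
      Metric.closedBall (0 : EuclideanSpace ℝ (Fin 2)) D \
        Metric.ball (0 : EuclideanSpace ℝ (Fin 2)) r := by
    ext w
    simp only [hS, mem_inter_iff, mem_compl_iff, mem_ball, mem_diff,
      mem_closedBall, dist_zero_right, not_lt]
    constructor
    · rintro ⟨ha, hb, hc'⟩; exact ⟨hb, ha⟩
    · rintro ⟨ha, hb⟩; exact ⟨hb, ha, le_trans hρr hb⟩
  rw [Measure.smul_apply, Measure.restrict_apply (measurableSet_ball.compl), hinter]
  have volS : volume S = ENNReal.ofReal (Real.pi * (D ^ 2 - ρ ^ 2)) := by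
    rw [hS, measure_diff (Metric.ball_subset_closedBall.trans
        (Metric.closedBall_subset_closedBall hρD.le))
      measurableSet_ball.nullMeasurableSet (measure_ball_lt_top).ne,
      euclidean_volume_closedBall2 D hD.le, euclidean_volume_ball2 ρ hρ0,
      ← ENNReal.ofReal_sub _ (by positivity)]
    ring_nf
  have volA : volume (Metric.closedBall (0 : EuclideanSpace ℝ (Fin 2)) D \
      Metric.ball (0 : EuclideanSpace ℝ (Fin 2)) r) =
      ENNReal.ofReal (Real.pi * (D ^ 2 - r ^ 2)) := by
    rw [measure_diff (Metric.ball_subset_closedBall.trans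
        (Metric.closedBall_subset_closedBall hrD))
      measurableSet_ball.nullMeasurableSet (measure_ball_lt_top).ne,
      euclidean_volume_closedBall2 D hD.le, euclidean_volume_ball2 r hr0,
      ← ENNReal.ofReal_sub _ (by positivity)]
    ring_nf
  have hDρ : (0:ℝ) < D ^ 2 - ρ ^ 2 := by nlinarith
  have hDr : (0:ℝ) ≤ D ^ 2 - r ^ 2 := by nlinarith
  rw [volS, volA, smul_eq_mul,
    ← ENNReal.ofReal_inv_of_pos (mul_pos Real.pi_pos hDρ),
    ← ENNReal.ofReal_mul (inv_nonneg.mpr (mul_nonneg Real.pi_nonneg hDρ.le))]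
  congr 1
  -- real arithmetic
  have hexp : (-2 : ℝ) / (m + 3) = -q := by rw [hq]; ring
  have hvq : vmin ^ (-q) = c ^ (-q) * (D ^ 2 + l ^ 2) := by
    rw [hvmin, Real.mul_rpow hc.le (Real.rpow_nonneg (by positivity) _),
      ← Real.rpow_mul (by positivity : (0:ℝ) ≤ D ^ 2 + l ^ 2),
      show -(m + 3) / 2 * -q = 1 by rw [hq]; field_simp, Real.rpow_one]
  have hhq : c ^ (-q) * t = h ^ (-q) := by
    rw [ht, Real.div_rpow hc.le hh0.le, Real.rpow_neg hc.le, Real.rpow_neg hh0.le]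
    have : c ^ q ≠ 0 := (Real.rpow_pos_of_pos hc q).ne'
    field_simp
  have hcq : c ^ q * c ^ (-q) = 1 := by
    rw [← Real.rpow_add hc, add_neg_cancel, Real.rpow_zero]
  rw [hexp, hvq, ← hhq, hΞ₂, hr2]
  have hπ : Real.pi ≠ 0 := Real.pi_ne_zero
  rw [show (m + 3) * (2 / ((m + 3) * (D ^ 2 - ρ ^ 2)) * c ^ q) / 2 *
      (c ^ (-q) * (D ^ 2 + l ^ 2) - c ^ (-q) * t) =
      (c ^ q * c ^ (-q)) * ((m + 3) * (2 / ((m + 3) * (D ^ 2 - ρ ^ 2))) / 2 *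
        ((D ^ 2 + l ^ 2) - t)) by ring, hcq, one_mul]
  field_simp
  ring
end

section
/- (Theorem 3, case 2.) If χ²·v_min²/v_mid² < γ_th ≤ χ², then Pr(J_B ≤ γ_th·J_E) = S₁, where S₁ = ψ(m+3)²·J_{B,min}^{−1/(m+3)}·[(J_{B,min}/γ_th)^{−1/(m+3)} − J_{E,max}^{−1/(m+3)}] − (ψ/2)(m+3)²·γ_th^{−1/(m+3)}·[(J_{B,min}/γ_th)^{−2/(m+3)} − J_{E,max}^{−2/(m+3)}]. -/
open MeasureTheory ProbabilityTheory Metric Set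

open Real

local notation "E2" => EuclideanSpace ℝ (Fin 2)

lemma vol_cb (r : ℝ) (hr : 0 ≤ r) :
    volume (Metric.closedBall (0 : E2) r) = ENNReal.ofReal (π * r ^ 2) := by
  rw [EuclideanSpace.volume_closedBall]
  have h2 : (Fintype.card (Fin 2)) = 2 := by simp
  rw [h2]
  have hg : Real.Gamma ((2 : ℕ) / 2 + 1) = 1 := by
    norm_num
  rw [hg]
  rw [Real.sq_sqrt Real.pi_nonneg]
  rw [← ENNReal.ofReal_pow hr, ← ENNReal.ofReal_mul (by positivity)]
  ring_nf

lemma vol_b (r : ℝ) (hr : 0 ≤ r) :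
    volume (Metric.ball (0 : E2) r) = ENNReal.ofReal (π * r ^ 2) := by
  rw [EuclideanSpace.volume_ball]
  have h2 : (Fintype.card (Fin 2)) = 2 := by simp
  rw [h2]
  have hg : Real.Gamma ((2 : ℕ) / 2 + 1) = 1 := by
    norm_num
  rw [hg, Real.sq_sqrt Real.pi_nonneg,
    ← ENNReal.ofReal_pow hr, ← ENNReal.ofReal_mul (by positivity)]
  ring_nf

lemma vol_diff (ρ t : ℝ) (hρ : 0 ≤ ρ) (hρt : ρ ≤ t) :
    volume (Metric.closedBall (0 : E2) t \ Metric.ball (0 : E2) ρ)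
      = ENNReal.ofReal (π * (t ^ 2 - ρ ^ 2)) := by
  rw [measure_diff (Metric.ball_subset_closedBall.trans
        (Metric.closedBall_subset_closedBall hρt))
      measurableSet_ball.nullMeasurableSet (by
        rw [vol_b ρ hρ]; exact ENNReal.ofReal_ne_top)]
  rw [vol_cb t (hρ.trans hρt), vol_b ρ hρ, ← ENNReal.ofReal_sub _ (by positivity)]
  ring_nf

lemma ann_inter (ρ D t : ℝ) (hρt : ρ ≤ t) (htD : t ≤ D) :
    (Metric.closedBall (0 : E2) D \ Metric.ball (0 : E2) ρ) ∩ Metric.closedBall (0 : E2) t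
      = Metric.closedBall (0 : E2) t \ Metric.ball (0 : E2) ρ := by
  ext w
  simp only [Set.mem_inter_iff, Set.mem_diff, Metric.mem_closedBall, Metric.mem_ball]
  constructor
  · rintro ⟨⟨_, h2⟩, h3⟩; exact ⟨h3, h2⟩
  · rintro ⟨h1, h2⟩; exact ⟨⟨h1.trans htD, h2⟩, h1⟩

-- slice measure of annulus-uniform for {w | ‖w‖^2 ≤ x}, x ≤ D²
lemma slice_meas (ρ D x : ℝ) (hρ : 0 ≤ ρ) (hρD : ρ < D) (hxD : x ≤ D ^ 2) :
    (volume (Metric.closedBall (0 : E2) D \ Metric.ball (0 : E2) ρ))⁻¹ *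
      volume ({w : E2 | ‖w‖ ^ 2 ≤ x} ∩
        (Metric.closedBall (0 : E2) D \ Metric.ball (0 : E2) ρ))
      = ENNReal.ofReal ((x - ρ ^ 2) / (D ^ 2 - ρ ^ 2)) := by
  have hD : 0 < D := lt_of_le_of_lt hρ hρD
  have hden : (0:ℝ) < D ^ 2 - ρ ^ 2 := by nlinarith
  rw [vol_diff ρ D hρ hρD.le]
  by_cases hx : ρ ^ 2 ≤ x
  · have hx0 : 0 ≤ x := (by positivity : (0:ℝ) ≤ ρ^2).trans hx
    have hset : {w : E2 | ‖w‖ ^ 2 ≤ x} = Metric.closedBall (0 : E2) (Real.sqrt x) := by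
      ext w
      simp only [Set.mem_setOf_eq, Metric.mem_closedBall, dist_zero_right]
      exact (Real.le_sqrt (norm_nonneg w) hx0).symm
    have hsD : Real.sqrt x ≤ D := by
      rw [show D = Real.sqrt (D ^ 2) from (Real.sqrt_sq hD.le).symm]
      exact Real.sqrt_le_sqrt hxD
    have hρs : ρ ≤ Real.sqrt x := by
      rw [show ρ = Real.sqrt (ρ ^ 2) from (Real.sqrt_sq hρ).symm]
      exact Real.sqrt_le_sqrt hx
    rw [hset, Set.inter_comm, ann_inter ρ D _ hρs hsD, vol_diff ρ _ hρ hρs,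
      Real.sq_sqrt hx0]
    rw [← ENNReal.ofReal_inv_of_pos (by positivity), ← ENNReal.ofReal_mul (by positivity)]
    congr 1
    field_simp
  · have hempty : {w : E2 | ‖w‖ ^ 2 ≤ x} ∩
        (Metric.closedBall (0 : E2) D \ Metric.ball (0 : E2) ρ) = ∅ := by
      apply Set.eq_empty_iff_forall_notMem.mpr
      rintro w ⟨h1, hw, h3⟩
      simp only [Metric.mem_ball, dist_zero_right, not_lt] at h3
      have h1' : ‖w‖ ^ 2 ≤ x := h1
      nlinarith [norm_nonneg w]
    rw [hempty, measure_empty, mul_zero]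
    rw [ENNReal.ofReal_eq_zero.mpr]
    exact div_nonpos_of_nonpos_of_nonneg (by nlinarith) hden.le

lemma oneD_int (D k q : ℝ) (hD : 0 < D) (hk : 0 < k) (hq : 0 ≤ q) (hqD : q ≤ k * D ^ 2) :
    ∫ y in (0:ℝ)..D, y * max 0 (k * y ^ 2 - q) = (k * D ^ 2 - q) ^ 2 / (4 * k) := by
  set r0 := Real.sqrt (q / k) with hr0def
  have hr02 : r0 ^ 2 = q / k := Real.sq_sqrt (by positivity)
  have hr00 : 0 ≤ r0 := Real.sqrt_nonneg _
  have hr0D : r0 ≤ D := by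
    rw [show D = Real.sqrt (D ^ 2) from (Real.sqrt_sq hD.le).symm]
    exact Real.sqrt_le_sqrt (by rw [div_le_iff₀ hk]; linarith)
  have hcont : Continuous fun y : ℝ => y * max 0 (k * y ^ 2 - q) :=
    continuous_id.mul (continuous_const.max (by continuity))
  have hsplit := intervalIntegral.integral_add_adjacent_intervals
    (a := (0:ℝ)) (b := r0) (c := D) (μ := volume)
    (hcont.intervalIntegrable _ _) (hcont.intervalIntegrable _ _)
  rw [← hsplit]
  have h1 : ∫ y in (0:ℝ)..r0, y * max 0 (k * y ^ 2 - q) = 0 := by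
    rw [intervalIntegral.integral_congr (g := fun _ => (0:ℝ))]
    · simp
    · intro y hy
      rw [Set.uIcc_of_le hr00] at hy
      have h2 : k * y ^ 2 - q ≤ 0 := by
        have : y ^ 2 ≤ q / k := by
          rw [← hr02]
          exact pow_le_pow_left₀ hy.1 hy.2 2
        rw [sub_nonpos, ← le_div_iff₀' hk]
        exact this
      simp [max_eq_left h2]
  have h2 : ∫ y in r0..D, y * max 0 (k * y ^ 2 - q)
      = ∫ y in r0..D, (k * y ^ 3 - q * y) := by
    apply intervalIntegral.integral_congr
    intro y hy
    rw [Set.uIcc_of_le hr0D] at hy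
    have hy0 : 0 ≤ y := hr00.trans hy.1
    have h3 : 0 ≤ k * y ^ 2 - q := by
      have : q / k ≤ y ^ 2 := by rw [← hr02]; exact pow_le_pow_left₀ hr00 hy.1 2
      rw [sub_nonneg, ← div_le_iff₀' hk]
      exact this
    show y * max 0 (k * y ^ 2 - q) = k * y ^ 3 - q * y
    rw [max_eq_right h3]
    ring
  rw [h1, h2, zero_add, intervalIntegral.integral_sub
    ((by continuity : Continuous fun y : ℝ => k * y ^ 3).intervalIntegrable _ _)
    ((by continuity : Continuous fun y : ℝ => q * y).intervalIntegrable _ _),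
    intervalIntegral.integral_const_mul, intervalIntegral.integral_const_mul,
    integral_pow, integral_id]
  have h4 : r0 ^ 4 = (q / k) ^ 2 := by rw [← hr02]; ring
  rw [show (3:ℕ) + 1 = 4 from rfl]
  push_cast
  rw [h4]
  have : r0 ^ 2 = q / k := hr02
  rw [this]
  field_simp
  ring

lemma radial_int (Dr : ℝ) (hD : 0 < Dr) (φ : ℝ → ℝ) :
    ∫ u in Metric.closedBall (0 : E2) Dr, φ ‖u‖
      = 2 * π * ∫ y in (0:ℝ)..Dr, y * φ y := by
  have hnt : Nontrivial E2 := inferInstance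
  set ψ := (Set.Icc 0 Dr).indicator φ with hψdef
  have hind : (fun u : E2 => ψ ‖u‖)
      = (Metric.closedBall (0 : E2) Dr).indicator (fun u => φ ‖u‖) := by
    funext u
    by_cases hu : ‖u‖ ≤ Dr
    · rw [Set.indicator_of_mem (by simpa [Metric.mem_closedBall] using hu),
        hψdef, Set.indicator_of_mem (Set.mem_Icc.mpr ⟨norm_nonneg u, hu⟩)]
    · rw [Set.indicator_of_notMem (by simpa [Metric.mem_closedBall] using hu),
        hψdef, Set.indicator_of_notMem (by simp [Set.mem_Icc, hu])]
  have key := integral_fun_norm_addHaar (volume : Measure E2) ψ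
  rw [← integral_indicator measurableSet_closedBall, ← hind, key]
  rw [finrank_euclideanSpace_fin, measureReal_def, vol_b 1 zero_le_one]
  have hmul : ∀ y : ℝ, y ^ (2 - 1) • ψ y
      = (Set.Icc 0 Dr).indicator (fun y => y * φ y) y := by
    intro y
    by_cases hy : y ∈ Set.Icc (0:ℝ) Dr
    · rw [Set.indicator_of_mem hy, hψdef, Set.indicator_of_mem hy]
      simp [smul_eq_mul]
    · rw [Set.indicator_of_notMem hy, hψdef, Set.indicator_of_notMem hy]
      simp
  simp only [hmul]
  rw [setIntegral_indicator measurableSet_Icc]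
  have hset : Set.Ioi (0:ℝ) ∩ Set.Icc 0 Dr = Set.Ioc 0 Dr := by
    ext y
    simp only [Set.mem_inter_iff, Set.mem_Ioi, Set.mem_Icc, Set.mem_Ioc]
    exact ⟨fun ⟨a, _, c⟩ => ⟨a, c⟩, fun ⟨a, c⟩ => ⟨a, a.le, c⟩⟩
  rw [hset, ← intervalIntegral.integral_of_le hD.le]
  rw [ENNReal.toReal_ofReal (by positivity)]
  simp [smul_eq_mul]
  ring

lemma rpow_base_decomp (a c X M : ℝ) (ha : 0 < a) (hc : 0 < c) (hX : 0 < X) (hM : 0 < M) :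
    (a * c ^ 2 * X ^ (-M)) ^ (-1 / M)
      = (a ^ (1 / M))⁻¹ * (c ^ (2 / M))⁻¹ * X := by
  have hMne : M ≠ 0 := hM.ne'
  rw [Real.mul_rpow (by positivity) (by positivity), Real.mul_rpow ha.le (by positivity)]
  congr 1
  · congr 1
    · rw [show (-1 : ℝ) / M = -(1 / M) by ring, Real.rpow_neg ha.le]
    · rw [← Real.rpow_natCast c 2, ← Real.rpow_mul hc.le]
      push_cast
      rw [show (2 : ℝ) * (-1 / M) = -(2 / M) by ring, Real.rpow_neg hc.le]
  · rw [← Real.rpow_mul hX.le, show -M * (-1 / M) = 1 by field_simp, Real.rpow_one]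

set_option maxHeartbeats 2000000

/-- Theorem 3, case 2: if `χ²·v_min²/v_mid² < γ_th ≤ χ²` (with `χ² = a/b`), then
`Pr(J_B ≤ γ_th·J_E) = S₁`. -/
theorem sop_case_two
    (D ρ l m c : ℝ) (hD : 0 < D) (hρ0 : 0 ≤ ρ) (hρD : ρ < D) (hl : 0 < l) (hm : 0 < m)
    (hc : 0 < c)
    (vmin vmid vmax : ℝ)
    (hvmin : vmin = c * (D ^ 2 + l ^ 2) ^ (-(m + 3) / 2))
    (hvmid : vmid = c * (ρ ^ 2 + l ^ 2) ^ (-(m + 3) / 2))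
    (hvmax : vmax = c * l ^ (-(m + 3)))
    (a b : ℝ) (ha : 0 < a) (hb : 0 < b)
    {Ω : Type*} [MeasureSpace Ω] [IsProbabilityMeasure (ℙ : Measure Ω)]
    (U W : Ω → EuclideanSpace ℝ (Fin 2)) (hU : Measurable U) (hW : Measurable W)
    (hUlaw : Measure.map U (ℙ : Measure Ω) =
      (volume (Metric.closedBall (0 : EuclideanSpace ℝ (Fin 2)) D))⁻¹ •
        volume.restrict (Metric.closedBall (0 : EuclideanSpace ℝ (Fin 2)) D))
    (hWlaw : Measure.map W (ℙ : Measure Ω) =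
      (volume (Metric.closedBall (0 : EuclideanSpace ℝ (Fin 2)) D \
          Metric.ball (0 : EuclideanSpace ℝ (Fin 2)) ρ))⁻¹ •
        volume.restrict (Metric.closedBall (0 : EuclideanSpace ℝ (Fin 2)) D \
          Metric.ball (0 : EuclideanSpace ℝ (Fin 2)) ρ))
    (hindep : IndepFun U W (ℙ : Measure Ω))
    (HB HE : Ω → ℝ)
    (hHB : ∀ ω, HB ω = c * (‖U ω‖ ^ 2 + l ^ 2) ^ (-(m + 3) / 2))
    (hHE : ∀ ω, HE ω = c * (‖W ω‖ ^ 2 + l ^ 2) ^ (-(m + 3) / 2))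
    (JB JE : Ω → ℝ)
    (hJB : ∀ ω, JB ω = a * HB ω ^ 2) (hJE : ∀ ω, JE ω = b * HE ω ^ 2)
    (γth : ℝ) (hγ : 0 < γth)
    (Ξ₁ Ξ₂ ψ : ℝ)
    (hΞ₁ : Ξ₁ = 2 / ((m + 3) * D ^ 2) * c ^ (2 / (m + 3)))
    (hΞ₂ : Ξ₂ = 2 / ((m + 3) * (D ^ 2 - ρ ^ 2)) * c ^ (2 / (m + 3)))
    (hψ : ψ = Ξ₁ * Ξ₂ / 4 * (a * b) ^ (1 / (m + 3)))
    (JBmin JBmax JEmin JEmax : ℝ)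
    (hJBmin : JBmin = a * vmin ^ 2) (hJBmax : JBmax = a * vmax ^ 2)
    (hJEmin : JEmin = b * vmin ^ 2) (hJEmax : JEmax = b * vmid ^ 2)
    (hcase₁ : a / b * vmin ^ 2 / vmid ^ 2 < γth) (hcase₂ : γth ≤ a / b) :
    (ℙ : Measure Ω) {ω | JB ω ≤ γth * JE ω} =
      ENNReal.ofReal
        (ψ * (m + 3) ^ 2 * JBmin ^ (-1 / (m + 3)) *
            ((JBmin / γth) ^ (-1 / (m + 3)) - JEmax ^ (-1 / (m + 3))) -
          ψ / 2 * (m + 3) ^ 2 * γth ^ (-1 / (m + 3)) *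
            ((JBmin / γth) ^ (-2 / (m + 3)) - JEmax ^ (-2 / (m + 3)))) := by
  have hM : (0:ℝ) < m + 3 := by linarith
  have hMne : (m + 3 : ℝ) ≠ 0 := hM.ne'
  set X : ℝ := D ^ 2 + l ^ 2 with hXdef
  set Y : ℝ := ρ ^ 2 + l ^ 2 with hYdef
  have hX : (0:ℝ) < X := by positivity
  have hY : (0:ℝ) < Y := by positivity
  set k : ℝ := (γth * b / a) ^ ((1:ℝ) / (m + 3)) with hkdef
  have hγba : (0:ℝ) < γth * b / a := by positivity
  have hk : 0 < k := Real.rpow_pos_of_pos hγba _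
  have hγba1 : γth * b / a ≤ 1 :=
    (div_le_one ha).mpr ((le_div_iff₀ hb).mp hcase₂)
  have hk1 : k ≤ 1 := Real.rpow_le_one hγba.le hγba1 (by positivity)
  -- squares of vmin, vmid
  have hsq : ∀ t : ℝ, 0 < t → (c * t ^ (-(m + 3) / 2)) ^ 2 = c ^ 2 * t ^ (-(m + 3)) := by
    intro t ht
    rw [mul_pow]
    congr 1
    rw [sq, ← Real.rpow_add ht]
    congr 1
    ring
  have hvmin2 : vmin ^ 2 = c ^ 2 * X ^ (-(m + 3)) := by rw [hvmin]; exact hsq X hX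
  have hvmid2 : vmid ^ 2 = c ^ 2 * Y ^ (-(m + 3)) := by rw [hvmid]; exact hsq Y hY
  have hXM : (0:ℝ) < X ^ (m + 3) := Real.rpow_pos_of_pos hX _
  have hYM : (0:ℝ) < Y ^ (m + 3) := Real.rpow_pos_of_pos hY _
  -- case 1 condition gives Y < k * X
  have hceq : a / b * vmin ^ 2 / vmid ^ 2 = a * Y ^ (m + 3) / (b * X ^ (m + 3)) := by
    rw [hvmin2, hvmid2, Real.rpow_neg hX.le, Real.rpow_neg hY.le]
    field_simp
  have hYlt : Y ^ (m + 3) < γth * b / a * X ^ (m + 3) := by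
    rw [hceq] at hcase₁
    rw [div_mul_eq_mul_div, lt_div_iff₀ ha]
    have h2 := (div_lt_iff₀ (by positivity : (0:ℝ) < b * X ^ (m + 3))).mp hcase₁
    calc Y ^ (m + 3) * a = a * Y ^ (m + 3) := by ring
      _ < γth * (b * X ^ (m + 3)) := h2
      _ = γth * b * X ^ (m + 3) := by ring
  have hroot : ∀ t : ℝ, 0 < t → (t ^ (m + 3)) ^ ((1:ℝ) / (m + 3)) = t := by
    intro t ht
    rw [← Real.rpow_mul ht.le, mul_one_div, div_self hMne, Real.rpow_one]
  have hYkX : Y < k * X := by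
    have h1 : (Y ^ (m + 3)) ^ ((1:ℝ)/(m+3)) < (γth * b / a * X ^ (m + 3)) ^ ((1:ℝ)/(m+3)) :=
      Real.rpow_lt_rpow (by positivity) hYlt (by positivity)
    rwa [hroot Y hY, Real.mul_rpow hγba.le hXM.le, hroot X hX] at h1
  -- the event rewritten
  have hkM : k ^ (m + 3) = γth * b / a := by
    rw [hkdef, ← Real.rpow_mul hγba.le, one_div_mul_cancel hMne, Real.rpow_one]
  have hEvent : ∀ ω, (JB ω ≤ γth * JE ω ↔ ‖W ω‖ ^ 2 + l ^ 2 ≤ k * (‖U ω‖ ^ 2 + l ^ 2)) := by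
    intro ω
    have hx : (0:ℝ) < ‖U ω‖ ^ 2 + l ^ 2 := by positivity
    have hy : (0:ℝ) < ‖W ω‖ ^ 2 + l ^ 2 := by positivity
    set x := ‖U ω‖ ^ 2 + l ^ 2
    set y := ‖W ω‖ ^ 2 + l ^ 2
    have hxM : (0:ℝ) < x ^ (m + 3) := Real.rpow_pos_of_pos hx _
    have hyM : (0:ℝ) < y ^ (m + 3) := Real.rpow_pos_of_pos hy _
    rw [hJB, hJE, hHB, hHE, hsq x hx, hsq y hy, Real.rpow_neg hx.le, Real.rpow_neg hy.le]
    rw [show a * (c ^ 2 * (x ^ (m + 3))⁻¹) = a * c ^ 2 / x ^ (m + 3) by ring,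
      show γth * (b * (c ^ 2 * (y ^ (m + 3))⁻¹)) = γth * b * c ^ 2 / y ^ (m + 3) by ring,
      div_le_div_iff₀ hxM hyM]
    rw [← Real.rpow_le_rpow_iff hy.le (by positivity : (0:ℝ) ≤ k * x) hM,
      Real.mul_rpow hk.le hx.le, hkM]
    constructor
    · intro h
      rw [div_mul_eq_mul_div, le_div_iff₀ ha]
      have hc2 : (0:ℝ) < c ^ 2 := by positivity
      have h' : (y ^ (m+3) * a) * c ^ 2 ≤ (γth * b * x ^ (m+3)) * c ^ 2 := by
        calc (y ^ (m+3) * a) * c ^ 2 = a * c ^ 2 * y ^ (m+3) := by ring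
          _ ≤ γth * b * c ^ 2 * x ^ (m+3) := h
          _ = (γth * b * x ^ (m+3)) * c ^ 2 := by ring
      exact le_of_mul_le_mul_right h' hc2
    · intro h
      rw [div_mul_eq_mul_div, le_div_iff₀ ha] at h
      have h2 := mul_le_mul_of_nonneg_left h (sq_nonneg c)
      calc a * c ^ 2 * y ^ (m+3) = c ^ 2 * (y ^ (m+3) * a) := by ring
        _ ≤ c ^ 2 * (γth * b * x ^ (m+3)) := h2
        _ = γth * b * c ^ 2 * x ^ (m+3) := by ring
  -- measure-theoretic reduction
  set Ann : Set (EuclideanSpace ℝ (Fin 2)) :=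
    Metric.closedBall (0 : EuclideanSpace ℝ (Fin 2)) D \
      Metric.ball (0 : EuclideanSpace ℝ (Fin 2)) ρ with hAnn
  set cbD : Set (EuclideanSpace ℝ (Fin 2)) :=
    Metric.closedBall (0 : EuclideanSpace ℝ (Fin 2)) D with hcbD
  set sset : Set (EuclideanSpace ℝ (Fin 2) × EuclideanSpace ℝ (Fin 2)) :=
    {p | ‖p.2‖ ^ 2 + l ^ 2 ≤ k * (‖p.1‖ ^ 2 + l ^ 2)} with hsset
  have hsmeas : MeasurableSet sset := by
    apply measurableSet_le
    · fun_prop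
    · fun_prop
  have hpair : Measurable fun ω => (U ω, W ω) := hU.prodMk hW
  have hsetEq : {ω | JB ω ≤ γth * JE ω} = (fun ω => (U ω, W ω)) ⁻¹' sset := by
    ext ω
    simp only [Set.mem_setOf_eq, Set.mem_preimage, hsset]
    exact hEvent ω
  have hjoint : Measure.map (fun ω => (U ω, W ω)) (ℙ : Measure Ω)
      = (Measure.map U ℙ).prod (Measure.map W ℙ) :=
    (ProbabilityTheory.indepFun_iff_map_prod_eq_prod_map_map hU.aemeasurable hW.aemeasurable).mp
      hindep
  rw [hsetEq, ← Measure.map_apply hpair hsmeas, hjoint, hUlaw, hWlaw,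
    Measure.prod_apply hsmeas, lintegral_smul_measure]
  -- the inner slice measure
  set q : ℝ := ρ ^ 2 + l ^ 2 - k * l ^ 2 with hqdef
  have hq0 : 0 ≤ q := by
    have h1 : 0 ≤ (1 - k) * l ^ 2 := mul_nonneg (by linarith) (sq_nonneg l)
    have h2 : q = ρ ^ 2 + (1 - k) * l ^ 2 := by rw [hqdef]; ring
    rw [h2]
    exact add_nonneg (sq_nonneg ρ) h1
  have hqkD : q ≤ k * D ^ 2 := by
    have heq : k * D ^ 2 - q = k * X - Y := by rw [hqdef, hXdef, hYdef]; ring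
    linarith [heq, hYkX]
  set φ : ℝ → ℝ := fun r => max 0 (k * (r ^ 2 + l ^ 2) - l ^ 2 - ρ ^ 2) / (D ^ 2 - ρ ^ 2)
    with hφdef
  have hden : (0:ℝ) < D ^ 2 - ρ ^ 2 :=
    sub_pos.mpr (by exact pow_lt_pow_left₀ hρD hρ0 (by norm_num))
  have hφcont : Continuous φ := by
    apply Continuous.div_const
    exact continuous_const.max (by continuity)
  have hφnn : ∀ r, 0 ≤ φ r := fun r => div_nonneg (le_max_left _ _) hden.le
  have hinner : ∀ᵐ u ∂(volume : Measure (EuclideanSpace ℝ (Fin 2))), u ∈ cbD →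
      ((volume Ann)⁻¹ • volume.restrict Ann) (Prod.mk u ⁻¹' sset)
        = ENNReal.ofReal (φ ‖u‖) := by
    apply ae_of_all
    intro u hu
    have huD : ‖u‖ ≤ D := by
      rw [hcbD, Metric.mem_closedBall, dist_zero_right] at hu
      exact hu
    have hpre : Prod.mk u ⁻¹' sset
        = {w : EuclideanSpace ℝ (Fin 2) | ‖w‖ ^ 2 ≤ k * (‖u‖ ^ 2 + l ^ 2) - l ^ 2} := by
      ext w
      simp only [Set.mem_preimage, hsset, Set.mem_setOf_eq]
      constructor
      · intro h; linarith
      · intro h; linarith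
    have hslicemeas : MeasurableSet
        {w : EuclideanSpace ℝ (Fin 2) | ‖w‖ ^ 2 ≤ k * (‖u‖ ^ 2 + l ^ 2) - l ^ 2} := by
      apply measurableSet_le <;> fun_prop
    rw [hpre, Measure.smul_apply, Measure.restrict_apply hslicemeas, smul_eq_mul]
    have hxD : k * (‖u‖ ^ 2 + l ^ 2) - l ^ 2 ≤ D ^ 2 := by
      have hxl : (0:ℝ) ≤ ‖u‖ ^ 2 + l ^ 2 := by positivity
      have h1 : k * (‖u‖ ^ 2 + l ^ 2) ≤ 1 * (‖u‖ ^ 2 + l ^ 2) :=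
        mul_le_mul_of_nonneg_right hk1 hxl
      have h2 : ‖u‖ ^ 2 ≤ D ^ 2 := by
        have := pow_le_pow_left₀ (norm_nonneg u) huD 2
        simpa using this
      linarith [h1, h2]
    rw [slice_meas ρ D _ hρ0 hρD hxD]
    have hφu : φ ‖u‖ = max 0 (k * (‖u‖ ^ 2 + l ^ 2) - l ^ 2 - ρ ^ 2) / (D ^ 2 - ρ ^ 2) := rfl
    rw [hφu]
    rcases le_or_gt 0 (k * (‖u‖ ^ 2 + l ^ 2) - l ^ 2 - ρ ^ 2) with h | h
    · rw [max_eq_right h]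
    · rw [max_eq_left h.le,
        ENNReal.ofReal_eq_zero.mpr (div_nonpos_of_nonpos_of_nonneg (by linarith) hden.le),
        ENNReal.ofReal_eq_zero.mpr (div_nonpos_of_nonpos_of_nonneg le_rfl hden.le)]
  rw [setLIntegral_congr_fun_ae measurableSet_closedBall hinner]
  -- to a real integral
  have hInt : IntegrableOn (fun u => φ ‖u‖) cbD volume :=
    (hφcont.comp continuous_norm).continuousOn.integrableOn_compact
      (isCompact_closedBall _ _)
  rw [← MeasureTheory.ofReal_integral_eq_lintegral_ofReal hInt
    (ae_of_all _ fun u => hφnn ‖u‖)]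
  rw [show (∫ u in cbD, φ ‖u‖) = 2 * Real.pi * ∫ y in (0:ℝ)..D, y * φ y from
    radial_int D hD φ]
  have hint2 : (∫ y in (0:ℝ)..D, y * φ y)
      = (D ^ 2 - ρ ^ 2)⁻¹ * ((k * D ^ 2 - q) ^ 2 / (4 * k)) := by
    have hyφ : ∀ y : ℝ, y * φ y = (D ^ 2 - ρ ^ 2)⁻¹ * (y * max 0 (k * y ^ 2 - q)) := by
      intro y
      show y * (max 0 (k * (y ^ 2 + l ^ 2) - l ^ 2 - ρ ^ 2) / (D ^ 2 - ρ ^ 2)) = _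
      rw [show k * (y ^ 2 + l ^ 2) - l ^ 2 - ρ ^ 2 = k * y ^ 2 - q by rw [hqdef]; ring]
      ring
    simp only [hyφ]
    rw [intervalIntegral.integral_const_mul, oneD_int D k q hD hk hq0 hqkD]
  rw [hint2, vol_cb D hD.le, ← ENNReal.ofReal_inv_of_pos (by positivity),
    smul_eq_mul, ← ENNReal.ofReal_mul (by positivity)]
  -- final algebra
  congr 1
  set α : ℝ := a ^ ((1:ℝ) / (m + 3)) with hαdef
  set β : ℝ := b ^ ((1:ℝ) / (m + 3)) with hβdef
  set g : ℝ := γth ^ ((1:ℝ) / (m + 3)) with hgdef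
  set κ : ℝ := c ^ ((2:ℝ) / (m + 3)) with hκdef
  have hα : 0 < α := Real.rpow_pos_of_pos ha _
  have hβ : 0 < β := Real.rpow_pos_of_pos hb _
  have hg : 0 < g := Real.rpow_pos_of_pos hγ _
  have hκ : 0 < κ := Real.rpow_pos_of_pos hc _
  have hJBminval : JBmin = a * c ^ 2 * X ^ (-(m + 3)) := by rw [hJBmin, hvmin2]; ring
  have hJEmaxval : JEmax = b * c ^ 2 * Y ^ (-(m + 3)) := by rw [hJEmax, hvmid2]; ring
  have hJBminpos : 0 < JBmin := by
    rw [hJBminval]; positivity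
  have hJEmaxpos : 0 < JEmax := by
    rw [hJEmaxval]; positivity
  have r1 : JBmin ^ (-1 / (m + 3)) = α⁻¹ * κ⁻¹ * X := by
    rw [hJBminval]; exact rpow_base_decomp a c X (m + 3) ha hc hX hM
  have r3 : JEmax ^ (-1 / (m + 3)) = β⁻¹ * κ⁻¹ * Y := by
    rw [hJEmaxval]; exact rpow_base_decomp b c Y (m + 3) hb hc hY hM
  have r5 : γth ^ (-1 / (m + 3)) = g⁻¹ := by
    rw [show (-1:ℝ) / (m + 3) = -(1 / (m + 3)) by ring, Real.rpow_neg hγ.le, hgdef]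
  have r2 : (JBmin / γth) ^ (-1 / (m + 3)) = α⁻¹ * κ⁻¹ * X * g := by
    rw [Real.div_rpow hJBminpos.le hγ.le, r1, r5, div_eq_mul_inv, inv_inv]
  have hdiv : 0 < JBmin / γth := div_pos hJBminpos hγ
  have r4 : (JBmin / γth) ^ (-2 / (m + 3)) = (α⁻¹ * κ⁻¹ * X * g) ^ 2 := by
    rw [show (-2:ℝ) / (m + 3) = -1 / (m + 3) + -1 / (m + 3) by ring,
      Real.rpow_add hdiv, r2, sq]
  have r6 : JEmax ^ (-2 / (m + 3)) = (β⁻¹ * κ⁻¹ * Y) ^ 2 := by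
    rw [show (-2:ℝ) / (m + 3) = -1 / (m + 3) + -1 / (m + 3) by ring,
      Real.rpow_add hJEmaxpos, r3, sq]
  have rψ : ψ = κ ^ 2 * α * β / ((m + 3) ^ 2 * D ^ 2 * (D ^ 2 - ρ ^ 2)) := by
    rw [hψ, hΞ₁, hΞ₂, Real.mul_rpow ha.le hb.le]
    field_simp
    ring
  have rk : k = g * β * α⁻¹ := by
    rw [hkdef, Real.div_rpow (by positivity) ha.le, Real.mul_rpow hγ.le hb.le,
      div_eq_mul_inv, hgdef, hβdef, hαdef]
  have hkDq : k * D ^ 2 - q = k * X - Y := by rw [hqdef, hXdef, hYdef]; ring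
  rw [rψ, r1, r2, r3, r4, r5, r6, hkDq, rk]
  have hπ : (0:ℝ) < Real.pi := Real.pi_pos
  field_simp
  ring
end

section
/- (Theorem 3, case 3.) If χ² < γ_th ≤ χ²·v_max²/v_mid², then Pr(J_B ≤ γ_th·J_E) = S₂, where S₂ = ψ(m+3)²·J_{B,min}^{−1/(m+3)}·(J_{E,min}^{−1/(m+3)} − J_{E,max}^{−1/(m+3)}) − (ψ/2)(m+3)²·γ_th^{−1/(m+3)}·(J_{E,min}^{−2/(m+3)} − J_{E,max}^{−2/(m+3)}). -/
open MeasureTheory ProbabilityTheory Metric Set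

open Real in
lemma vol2_ball (r : ℝ) (hr : 0 ≤ r) :
    volume (Metric.ball (0 : EuclideanSpace ℝ (Fin 2)) r) = ENNReal.ofReal (π * r ^ 2) := by
  rw [EuclideanSpace.volume_ball]
  have h2 : ((Fintype.card (Fin 2) : ℝ) / 2 + 1) = 2 := by simp; norm_num
  rw [Fintype.card_fin] at h2 ⊢
  rw [h2, Real.Gamma_two, div_one, Real.sq_sqrt pi_nonneg, ← ENNReal.ofReal_pow hr,
    ← ENNReal.ofReal_mul (by positivity), mul_comm]

open Real in
lemma vol2_closedBall (r : ℝ) (hr : 0 ≤ r) :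
    volume (Metric.closedBall (0 : EuclideanSpace ℝ (Fin 2)) r) = ENNReal.ofReal (π * r ^ 2) := by
  rw [Measure.addHaar_closedBall_eq_addHaar_ball]
  exact vol2_ball r hr

open Real in
lemma vol2_annulus (r₁ r₂ : ℝ) (h0 : 0 ≤ r₁) (h : r₁ ≤ r₂) :
    volume (Metric.closedBall (0 : EuclideanSpace ℝ (Fin 2)) r₂ \
      Metric.ball (0 : EuclideanSpace ℝ (Fin 2)) r₁) =
      ENNReal.ofReal (π * (r₂ ^ 2 - r₁ ^ 2)) := by
  rw [measure_diff (ball_subset_closedBall.trans (closedBall_subset_closedBall h))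
    measurableSet_ball.nullMeasurableSet (by rw [vol2_ball r₁ h0]; exact ENNReal.ofReal_ne_top),
    vol2_ball r₁ h0, vol2_closedBall r₂ (h0.trans h), ← ENNReal.ofReal_sub _ (by positivity)]
  ring_nf

open Real in
lemma slice_vol (D θ : ℝ) (hD : 0 ≤ D) (hθ : 0 ≤ θ) (hθD : θ ≤ D ^ 2) :
    volume (Metric.closedBall (0 : EuclideanSpace ℝ (Fin 2)) D ∩ {u | θ ≤ ‖u‖ ^ 2}) =
      ENNReal.ofReal (π * (D ^ 2 - θ)) := by
  have hset : Metric.closedBall (0 : EuclideanSpace ℝ (Fin 2)) D ∩ {u | θ ≤ ‖u‖ ^ 2} =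
      Metric.closedBall (0 : EuclideanSpace ℝ (Fin 2)) D \
        Metric.ball (0 : EuclideanSpace ℝ (Fin 2)) (Real.sqrt θ) := by
    ext u
    simp only [mem_inter_iff, mem_diff, mem_closedBall, mem_ball, dist_zero_right, mem_setOf_eq,
      not_lt]
    constructor
    · rintro ⟨h1, h2⟩
      exact ⟨h1, Real.sqrt_le_sqrt h2 |>.trans_eq (Real.sqrt_sq (norm_nonneg u))⟩
    · rintro ⟨h1, h2⟩
      refine ⟨h1, ?_⟩
      calc θ = Real.sqrt θ ^ 2 := (Real.sq_sqrt hθ).symm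
        _ ≤ ‖u‖ ^ 2 := by nlinarith [Real.sqrt_nonneg θ, norm_nonneg u]
  rw [hset, vol2_annulus _ _ (Real.sqrt_nonneg θ)
    (by rw [← Real.sqrt_sq hD]; exact Real.sqrt_le_sqrt hθD), Real.sq_sqrt hθ]

open Real in
lemma map_normSq_annulus (ρ D : ℝ) (hρ0 : 0 ≤ ρ) (hρD : ρ ≤ D) :
    Measure.map (fun w : EuclideanSpace ℝ (Fin 2) => ‖w‖ ^ 2)
      (volume.restrict (Metric.closedBall 0 D \ Metric.ball 0 ρ)) =
      ENNReal.ofReal π • volume.restrict (Icc (ρ ^ 2) (D ^ 2)) := by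
  have hD : 0 ≤ D := hρ0.trans hρD
  have hmeas : Measurable (fun w : EuclideanSpace ℝ (Fin 2) => ‖w‖ ^ 2) :=
    measurable_norm.pow_const 2
  haveI : IsFiniteMeasure
      (volume.restrict (Metric.closedBall (0 : EuclideanSpace ℝ (Fin 2)) D \
        Metric.ball 0 ρ)) := by
    constructor
    rw [Measure.restrict_apply_univ, vol2_annulus ρ D hρ0 hρD]
    exact ENNReal.ofReal_lt_top
  refine Measure.ext_of_Iic _ _ (fun x => ?_)
  rw [Measure.map_apply hmeas measurableSet_Iic,
    Measure.restrict_apply (hmeas measurableSet_Iic), Measure.smul_apply,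
    Measure.restrict_apply measurableSet_Iic, smul_eq_mul]
  rcases lt_or_ge x (ρ ^ 2) with hx | hx
  · have h1 : (fun w : EuclideanSpace ℝ (Fin 2) => ‖w‖ ^ 2) ⁻¹' Iic x ∩
        (Metric.closedBall 0 D \ Metric.ball 0 ρ) = ∅ := by
      ext w
      simp only [mem_inter_iff, mem_preimage, mem_Iic, mem_diff, mem_closedBall, mem_ball,
        dist_zero_right, not_lt, mem_empty_iff_false, iff_false, not_and, and_imp]
      intro h1 h2 h3
      nlinarith [norm_nonneg w]
    have h2 : Iic x ∩ Icc (ρ ^ 2) (D ^ 2) = ∅ := by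
      ext y
      simp only [mem_inter_iff, mem_Iic, mem_Icc, mem_empty_iff_false, iff_false, not_and, and_imp]
      intro h1 h2 h3
      linarith
    rw [h1, h2]
    simp
  · rcases le_or_gt x (D ^ 2) with hx2 | hx2
    · have hxs : Real.sqrt x ≤ D := by
        rw [← Real.sqrt_sq hD]; exact Real.sqrt_le_sqrt hx2
      have h1 : (fun w : EuclideanSpace ℝ (Fin 2) => ‖w‖ ^ 2) ⁻¹' Iic x ∩
          (Metric.closedBall 0 D \ Metric.ball 0 ρ) =
          (Metric.closedBall 0 (Real.sqrt x) \ Metric.ball 0 ρ) := by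
        ext w
        simp only [mem_inter_iff, mem_preimage, mem_Iic, mem_diff, mem_closedBall, mem_ball,
          dist_zero_right, not_lt]
        constructor
        · rintro ⟨h1, _, h3⟩
          refine ⟨?_, h3⟩
          rw [← Real.sqrt_sq (norm_nonneg w)]
          exact Real.sqrt_le_sqrt h1
        · rintro ⟨h1, h2⟩
          refine ⟨?_, h1.trans hxs, h2⟩
          calc ‖w‖ ^ 2 ≤ Real.sqrt x ^ 2 := by nlinarith [norm_nonneg w, Real.sqrt_nonneg x]
            _ = x := Real.sq_sqrt (le_trans (by positivity) hx)
      have h2 : Iic x ∩ Icc (ρ ^ 2) (D ^ 2) = Icc (ρ ^ 2) x := by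
        ext y
        simp only [mem_inter_iff, mem_Iic, mem_Icc]
        constructor
        · rintro ⟨h1, h2, h3⟩; exact ⟨h2, h1⟩
        · rintro ⟨h1, h2⟩; exact ⟨h2, h1, h2.trans hx2⟩
      rw [h1, h2, vol2_annulus ρ (Real.sqrt x) hρ0
        (by rw [← Real.sqrt_sq hρ0]; exact Real.sqrt_le_sqrt hx),
        Real.sq_sqrt (le_trans (by positivity) hx), Real.volume_Icc,
        ← ENNReal.ofReal_mul pi_nonneg]
    · have h1 : (fun w : EuclideanSpace ℝ (Fin 2) => ‖w‖ ^ 2) ⁻¹' Iic x ∩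
          (Metric.closedBall 0 D \ Metric.ball 0 ρ) =
          (Metric.closedBall 0 D \ Metric.ball 0 ρ) := by
        apply inter_eq_self_of_subset_right
        intro w hw
        simp only [mem_diff, mem_closedBall, dist_zero_right] at hw
        simp only [mem_preimage, mem_Iic]
        nlinarith [norm_nonneg w, hw.1]
      have h2 : Iic x ∩ Icc (ρ ^ 2) (D ^ 2) = Icc (ρ ^ 2) (D ^ 2) := by
        apply inter_eq_self_of_subset_right
        intro y hy
        simp only [mem_Icc] at hy
        simp only [mem_Iic]
        linarith [hy.2]
      rw [h1, h2, vol2_annulus ρ D hρ0 hρD, Real.volume_Icc,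
        ← ENNReal.ofReal_mul pi_nonneg]

lemma lint_linear (p q C1 C2 : ℝ) (hpq : p ≤ q) (hn : ∀ x ∈ Icc p q, 0 ≤ C1 - C2 * x) :
    ∫⁻ x in Icc p q, ENNReal.ofReal (C1 - C2 * x) =
      ENNReal.ofReal (C1 * (q - p) - C2 * ((q ^ 2 - p ^ 2) / 2)) := by
  have hint : IntegrableOn (fun x : ℝ => C1 - C2 * x) (Icc p q) volume :=
    (continuous_const.sub (continuous_const.mul continuous_id)).integrableOn_Icc
  rw [← ofReal_integral_eq_lintegral_ofReal hint
    ((ae_restrict_iff' measurableSet_Icc).2 (ae_of_all _ hn))]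
  congr 1
  rw [integral_Icc_eq_integral_Ioc, ← intervalIntegral.integral_of_le hpq,
    intervalIntegral.integral_sub intervalIntegrable_const
      (intervalIntegral.intervalIntegrable_id.const_mul _),
    intervalIntegral.integral_const, intervalIntegral.integral_const_mul, integral_id]
  simp [smul_eq_mul]
  ring

lemma rpow_helper (a c t μ : ℝ) (ha : 0 < a) (hc : 0 < c) (ht : 0 < t) (hμ : 0 < μ) :
    (a * (c ^ 2 * t ^ (-μ))) ^ (-1 / μ) = (a ^ (1 / μ) * c ^ (2 / μ))⁻¹ * t := by
  have e : (-1 / μ : ℝ) = -(1 / μ) := by ring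
  rw [e, Real.mul_rpow ha.le (by positivity), Real.mul_rpow (by positivity) (by positivity),
    Real.rpow_neg ha.le, ← Real.rpow_natCast c 2, ← Real.rpow_mul hc.le,
    ← Real.rpow_mul ht.le]
  have e2 : ((2 : ℕ) : ℝ) * -(1 / μ) = -(2 / μ) := by ring
  have e3 : -μ * -(1 / μ) = 1 := by field_simp
  rw [e2, e3, Real.rpow_one, Real.rpow_neg hc.le, mul_inv]
  ring

lemma rpow_helper2 (a c t μ : ℝ) (ha : 0 < a) (hc : 0 < c) (ht : 0 < t) (hμ : 0 < μ) :
    (a * (c ^ 2 * t ^ (-μ))) ^ (-2 / μ) = ((a ^ (1 / μ) * c ^ (2 / μ))⁻¹ * t) ^ 2 := by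
  have e : (-2 / μ : ℝ) = -(1 / μ) * 2 := by ring
  rw [e, Real.rpow_mul (by positivity), Real.rpow_two, ← (by ring : (-1 / μ : ℝ) = -(1 / μ)),
    rpow_helper a c t μ ha hc ht hμ]

lemma rpow_sq_helper (t μ : ℝ) (ht : 0 < t) : (t ^ (-μ / 2)) ^ 2 = t ^ (-μ) := by
  rw [sq, ← Real.rpow_add ht]
  congr 1
  ring

lemma event_iff (a b c γth l m τ : ℝ) (ha : 0 < a) (hb : 0 < b) (hc : 0 < c) (hγ : 0 < γth)
    (hl : 0 < l) (hτ : τ = (a / (γth * b)) ^ (1 / (m + 3))) (hμ : 0 < m + 3) (r s : ℝ) :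
    a * (c * (r ^ 2 + l ^ 2) ^ (-(m + 3) / 2)) ^ 2 ≤
        γth * (b * (c * (s ^ 2 + l ^ 2) ^ (-(m + 3) / 2)) ^ 2) ↔
      τ * (s ^ 2 + l ^ 2) ≤ r ^ 2 + l ^ 2 := by
  have hp : (0:ℝ) < r ^ 2 + l ^ 2 := by positivity
  have hq : (0:ℝ) < s ^ 2 + l ^ 2 := by positivity
  have hτ0 : 0 ≤ τ := by rw [hτ]; positivity
  set P := (r ^ 2 + l ^ 2) ^ (m + 3) with hP
  set Q := (s ^ 2 + l ^ 2) ^ (m + 3) with hQ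
  have hPpos : 0 < P := Real.rpow_pos_of_pos hp _
  have hQpos : 0 < Q := Real.rpow_pos_of_pos hq _
  have h1 : (c * (r ^ 2 + l ^ 2) ^ (-(m + 3) / 2)) ^ 2 = c ^ 2 * P⁻¹ := by
    rw [mul_pow, rpow_sq_helper _ _ hp, Real.rpow_neg hp.le]
  have h2 : (c * (s ^ 2 + l ^ 2) ^ (-(m + 3) / 2)) ^ 2 = c ^ 2 * Q⁻¹ := by
    rw [mul_pow, rpow_sq_helper _ _ hq, Real.rpow_neg hq.le]
  rw [h1, h2]
  have step1 : a * (c ^ 2 * P⁻¹) ≤ γth * (b * (c ^ 2 * Q⁻¹)) ↔ a * Q ≤ γth * b * P := by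
    rw [show a * (c ^ 2 * P⁻¹) = a * c ^ 2 / P by ring,
      show γth * (b * (c ^ 2 * Q⁻¹)) = γth * b * c ^ 2 / Q by ring,
      div_le_div_iff₀ hPpos hQpos,
      show a * c ^ 2 * Q = (a * Q) * c ^ 2 by ring,
      show γth * b * c ^ 2 * P = (γth * b * P) * c ^ 2 by ring,
      mul_le_mul_iff_of_pos_right (by positivity : (0:ℝ) < c ^ 2)]
  have hτμ : τ ^ (m + 3) = a / (γth * b) := by
    rw [hτ, ← Real.rpow_mul (by positivity), one_div_mul_cancel hμ.ne', Real.rpow_one]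
  have step2 : a * Q ≤ γth * b * P ↔ τ * (s ^ 2 + l ^ 2) ≤ r ^ 2 + l ^ 2 := by
    rw [← Real.rpow_le_rpow_iff (by positivity) hp.le hμ, Real.mul_rpow hτ0 hq.le, hτμ,
      div_mul_eq_mul_div, div_le_iff₀ (by positivity), ← hP, ← hQ,
      show P * (γth * b) = γth * b * P by ring]
  exact step1.trans step2

set_option maxHeartbeats 2000000 in
open Real in
/-- Theorem 3, case 3: if `χ² < γ_th ≤ χ²·v_max²/v_mid²` (with `χ² = a/b`), then
`Pr(J_B ≤ γ_th·J_E) = S₂`. -/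
theorem sop_case_three
    (D ρ l m c : ℝ) (hD : 0 < D) (hρ0 : 0 ≤ ρ) (hρD : ρ < D) (hl : 0 < l) (hm : 0 < m)
    (hc : 0 < c)
    (vmin vmid vmax : ℝ)
    (hvmin : vmin = c * (D ^ 2 + l ^ 2) ^ (-(m + 3) / 2))
    (hvmid : vmid = c * (ρ ^ 2 + l ^ 2) ^ (-(m + 3) / 2))
    (hvmax : vmax = c * l ^ (-(m + 3)))
    (a b : ℝ) (ha : 0 < a) (hb : 0 < b)
    {Ω : Type*} [MeasureSpace Ω] [IsProbabilityMeasure (ℙ : Measure Ω)]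
    (U W : Ω → EuclideanSpace ℝ (Fin 2)) (hU : Measurable U) (hW : Measurable W)
    (hUlaw : Measure.map U (ℙ : Measure Ω) =
      (volume (Metric.closedBall (0 : EuclideanSpace ℝ (Fin 2)) D))⁻¹ •
        volume.restrict (Metric.closedBall (0 : EuclideanSpace ℝ (Fin 2)) D))
    (hWlaw : Measure.map W (ℙ : Measure Ω) =
      (volume (Metric.closedBall (0 : EuclideanSpace ℝ (Fin 2)) D \
          Metric.ball (0 : EuclideanSpace ℝ (Fin 2)) ρ))⁻¹ •
        volume.restrict (Metric.closedBall (0 : EuclideanSpace ℝ (Fin 2)) D \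
          Metric.ball (0 : EuclideanSpace ℝ (Fin 2)) ρ))
    (hindep : IndepFun U W (ℙ : Measure Ω))
    (HB HE : Ω → ℝ)
    (hHB : ∀ ω, HB ω = c * (‖U ω‖ ^ 2 + l ^ 2) ^ (-(m + 3) / 2))
    (hHE : ∀ ω, HE ω = c * (‖W ω‖ ^ 2 + l ^ 2) ^ (-(m + 3) / 2))
    (JB JE : Ω → ℝ)
    (hJB : ∀ ω, JB ω = a * HB ω ^ 2) (hJE : ∀ ω, JE ω = b * HE ω ^ 2)
    (γth : ℝ) (hγ : 0 < γth)
    (Ξ₁ Ξ₂ ψ : ℝ)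
    (hΞ₁ : Ξ₁ = 2 / ((m + 3) * D ^ 2) * c ^ (2 / (m + 3)))
    (hΞ₂ : Ξ₂ = 2 / ((m + 3) * (D ^ 2 - ρ ^ 2)) * c ^ (2 / (m + 3)))
    (hψ : ψ = Ξ₁ * Ξ₂ / 4 * (a * b) ^ (1 / (m + 3)))
    (JBmin JBmax JEmin JEmax : ℝ)
    (hJBmin : JBmin = a * vmin ^ 2) (hJBmax : JBmax = a * vmax ^ 2)
    (hJEmin : JEmin = b * vmin ^ 2) (hJEmax : JEmax = b * vmid ^ 2)
    (hcase₁ : a / b < γth) (hcase₂ : γth ≤ a / b * vmax ^ 2 / vmid ^ 2) :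
    (ℙ : Measure Ω) {ω | JB ω ≤ γth * JE ω} =
      ENNReal.ofReal
        (ψ * (m + 3) ^ 2 * JBmin ^ (-1 / (m + 3)) *
            (JEmin ^ (-1 / (m + 3)) - JEmax ^ (-1 / (m + 3))) -
          ψ / 2 * (m + 3) ^ 2 * γth ^ (-1 / (m + 3)) *
            (JEmin ^ (-2 / (m + 3)) - JEmax ^ (-2 / (m + 3)))) := by
  have hμ : (0:ℝ) < m + 3 := by linarith
  have hD2 : (0:ℝ) < D ^ 2 := by positivity
  have hX : (0:ℝ) < D ^ 2 + l ^ 2 := by positivity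
  have hY : (0:ℝ) < ρ ^ 2 + l ^ 2 := by positivity
  have hL2 : (0:ℝ) < l ^ 2 := by positivity
  have hD2ρ : (0:ℝ) < D ^ 2 - ρ ^ 2 := by nlinarith
  set τ : ℝ := (a / (γth * b)) ^ (1 / (m + 3)) with hτdef
  have hτ0 : 0 ≤ τ := by rw [hτdef]; positivity
  have hτ1 : τ ≤ 1 := by
    refine Real.rpow_le_one (by positivity) ?_ (by positivity)
    rw [div_le_one (by positivity)]
    nlinarith [(div_lt_iff₀ hb).1 hcase₁]
  -- derive l^2 ≤ τ * (ρ^2 + l^2) from hcase₂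
  have hτY : l ^ 2 ≤ τ * (ρ ^ 2 + l ^ 2) := by
    have hPl : (0:ℝ) < (l ^ 2) ^ (m + 3) := Real.rpow_pos_of_pos hL2 _
    have hQY : (0:ℝ) < (ρ ^ 2 + l ^ 2) ^ (m + 3) := Real.rpow_pos_of_pos hY _
    have he1 : (l ^ (-(m + 3)) : ℝ) ^ 2 = l ^ (-(2 * (m + 3)) : ℝ) := by
      rw [sq, ← Real.rpow_add hl]
      congr 1
      ring
    have he2 : ((l ^ 2 : ℝ)) ^ (m + 3) = l ^ (2 * (m + 3) : ℝ) := by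
      rw [← Real.rpow_natCast l 2, ← Real.rpow_mul hl.le]
      norm_num
    have hvmax2 : vmax ^ 2 = c ^ 2 * ((l ^ 2) ^ (m + 3))⁻¹ := by
      rw [hvmax, mul_pow, he1, he2, Real.rpow_neg hl.le]
    have hvmid2 : vmid ^ 2 = c ^ 2 * (((ρ ^ 2 + l ^ 2) ^ (m + 3)))⁻¹ := by
      rw [hvmid, mul_pow, rpow_sq_helper _ _ hY, Real.rpow_neg hY.le]
    rw [hvmax2, hvmid2] at hcase₂
    have h2 : a / b * (c ^ 2 * ((l ^ 2) ^ (m + 3))⁻¹) / (c ^ 2 * ((ρ ^ 2 + l ^ 2) ^ (m + 3))⁻¹)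
        = a * (ρ ^ 2 + l ^ 2) ^ (m + 3) / (b * (l ^ 2) ^ (m + 3)) := by
      rw [eq_div_iff (by positivity)]
      field_simp
    rw [h2] at hcase₂
    have h3 : (l ^ 2) ^ (m + 3) / (ρ ^ 2 + l ^ 2) ^ (m + 3) ≤ a / (γth * b) := by
      rw [div_le_div_iff₀ hQY (by positivity)]
      have := (le_div_iff₀ (by positivity : (0:ℝ) < b * (l ^ 2) ^ (m + 3))).1 hcase₂
      nlinarith [this]
    have h4 : l ^ 2 / (ρ ^ 2 + l ^ 2) ≤ τ := by
      have h5 := Real.rpow_le_rpow (by positivity) h3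
        (by positivity : (0:ℝ) ≤ 1 / (m + 3))
      rwa [Real.div_rpow (by positivity) (by positivity), ← Real.rpow_mul hL2.le,
        ← Real.rpow_mul hY.le, mul_one_div, div_self hμ.ne', Real.rpow_one,
        Real.rpow_one] at h5
    exact (div_le_iff₀ hY).1 h4
  -- rewrite the event
  have hEvent : {ω | JB ω ≤ γth * JE ω} = (fun ω => (U ω, W ω)) ⁻¹'
      {p : EuclideanSpace ℝ (Fin 2) × EuclideanSpace ℝ (Fin 2) |
        τ * (‖p.2‖ ^ 2 + l ^ 2) ≤ ‖p.1‖ ^ 2 + l ^ 2} := by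
    ext ω
    simp only [mem_setOf_eq, mem_preimage, hJB, hJE, hHB, hHE]
    exact event_iff a b c γth l m τ ha hb hc hγ hl hτdef hμ _ _
  have hEmeas : MeasurableSet {p : EuclideanSpace ℝ (Fin 2) × EuclideanSpace ℝ (Fin 2) |
      τ * (‖p.2‖ ^ 2 + l ^ 2) ≤ ‖p.1‖ ^ 2 + l ^ 2} := by
    apply measurableSet_le <;> fun_prop
  rw [hEvent, ← Measure.map_apply (hU.prodMk hW) hEmeas,
    (ProbabilityTheory.indepFun_iff_map_prod_eq_prod_map_map hU.aemeasurable
      hW.aemeasurable).mp hindep, hUlaw, hWlaw, Measure.prod_apply_symm hEmeas]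
  have hvolS : volume (Metric.closedBall (0 : EuclideanSpace ℝ (Fin 2)) D)
      = ENNReal.ofReal (π * D ^ 2) := vol2_closedBall D hD.le
  have hvolAnn : volume (Metric.closedBall (0 : EuclideanSpace ℝ (Fin 2)) D \
      Metric.ball (0 : EuclideanSpace ℝ (Fin 2)) ρ)
      = ENNReal.ofReal (π * (D ^ 2 - ρ ^ 2)) := vol2_annulus ρ D hρ0 hρD.le
  have hAnnMeas : MeasurableSet (Metric.closedBall (0 : EuclideanSpace ℝ (Fin 2)) D \
      Metric.ball (0 : EuclideanSpace ℝ (Fin 2)) ρ) :=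
    measurableSet_closedBall.diff measurableSet_ball
  rw [lintegral_smul_measure, smul_eq_mul]
  -- compute slices
  have hslice : ∀ w : EuclideanSpace ℝ (Fin 2),
      w ∈ (Metric.closedBall (0 : EuclideanSpace ℝ (Fin 2)) D \
        Metric.ball (0 : EuclideanSpace ℝ (Fin 2)) ρ) →
      ((volume (Metric.closedBall (0 : EuclideanSpace ℝ (Fin 2)) D))⁻¹ •
          volume.restrict (Metric.closedBall (0 : EuclideanSpace ℝ (Fin 2)) D))
        ((fun x => (x, w)) ⁻¹' {p : EuclideanSpace ℝ (Fin 2) × EuclideanSpace ℝ (Fin 2) |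
          τ * (‖p.2‖ ^ 2 + l ^ 2) ≤ ‖p.1‖ ^ 2 + l ^ 2}) =
        (ENNReal.ofReal (π * D ^ 2))⁻¹ *
          ENNReal.ofReal (π * (D ^ 2 + l ^ 2 - τ * l ^ 2) - π * τ * ‖w‖ ^ 2) := by
    intro w hw
    obtain ⟨hwD, hwρ⟩ : ‖w‖ ≤ D ∧ ρ ≤ ‖w‖ := by
      simp only [mem_diff, Metric.mem_closedBall, Metric.mem_ball, dist_zero_right,
        not_lt] at hw
      exact hw
    have hww : ρ ^ 2 ≤ ‖w‖ ^ 2 := by nlinarith [norm_nonneg w]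
    have hwD2 : ‖w‖ ^ 2 ≤ D ^ 2 := by nlinarith [norm_nonneg w]
    have hθ0 : 0 ≤ τ * (‖w‖ ^ 2 + l ^ 2) - l ^ 2 := by
      nlinarith [mul_le_mul_of_nonneg_left hww hτ0]
    have hθD : τ * (‖w‖ ^ 2 + l ^ 2) - l ^ 2 ≤ D ^ 2 := by
      nlinarith [mul_nonneg (sub_nonneg.2 hτ1) (by positivity : (0:ℝ) ≤ ‖w‖ ^ 2 + l ^ 2)]
    have hpre : ((fun x => (x, w)) ⁻¹' {p : EuclideanSpace ℝ (Fin 2) × EuclideanSpace ℝ (Fin 2) |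
        τ * (‖p.2‖ ^ 2 + l ^ 2) ≤ ‖p.1‖ ^ 2 + l ^ 2}) =
        {u : EuclideanSpace ℝ (Fin 2) | τ * (‖w‖ ^ 2 + l ^ 2) - l ^ 2 ≤ ‖u‖ ^ 2} := by
      ext u
      simp only [mem_preimage, mem_setOf_eq, sub_le_iff_le_add]
    have hsetmeas : MeasurableSet {u : EuclideanSpace ℝ (Fin 2) |
        τ * (‖w‖ ^ 2 + l ^ 2) - l ^ 2 ≤ ‖u‖ ^ 2} := by
      apply measurableSet_le <;> fun_prop
    simp only [Measure.smul_apply, smul_eq_mul]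
    rw [hpre, Measure.restrict_apply hsetmeas, inter_comm,
      slice_vol D _ hD.le hθ0 hθD, hvolS]
    congr 2
    ring
  rw [setLIntegral_congr_fun hAnnMeas hslice,
    lintegral_const_mul' _ _
      (ENNReal.inv_ne_top.2 (ENNReal.ofReal_pos.2 (by positivity)).ne')]
  have hcomp : ∫⁻ w in (Metric.closedBall (0 : EuclideanSpace ℝ (Fin 2)) D \
        Metric.ball (0 : EuclideanSpace ℝ (Fin 2)) ρ),
      ENNReal.ofReal (π * (D ^ 2 + l ^ 2 - τ * l ^ 2) - π * τ * ‖w‖ ^ 2) =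
      ENNReal.ofReal π * ENNReal.ofReal
        (π * (D ^ 2 + l ^ 2 - τ * l ^ 2) * (D ^ 2 - ρ ^ 2) -
          π * τ * (((D ^ 2) ^ 2 - (ρ ^ 2) ^ 2) / 2)) := by
    have hlm := lintegral_map (μ := volume.restrict
        (Metric.closedBall (0 : EuclideanSpace ℝ (Fin 2)) D \
          Metric.ball (0 : EuclideanSpace ℝ (Fin 2)) ρ))
      (f := (fun x : ℝ => ENNReal.ofReal (π * (D ^ 2 + l ^ 2 - τ * l ^ 2) - π * τ * x)))
      (g := (fun w : EuclideanSpace ℝ (Fin 2) => ‖w‖ ^ 2))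
      (by exact (measurable_const.sub (measurable_const.mul measurable_id)).ennreal_ofReal)
      (measurable_norm.pow_const 2)
    rw [← hlm, map_normSq_annulus ρ D hρ0 hρD.le, lintegral_smul_measure, smul_eq_mul,
      lint_linear _ _ _ _ (by nlinarith) ?_]
    intro x hx
    simp only [mem_Icc] at hx
    have hx0 : (0:ℝ) ≤ x + l ^ 2 := by nlinarith [hx.1, sq_nonneg ρ, sq_nonneg l]
    nlinarith [mul_nonneg (sub_nonneg.2 hτ1) hx0,
      Real.pi_pos, mul_le_mul_of_nonneg_left
        (show τ * (x + l ^ 2) ≤ x + l ^ 2 by nlinarith [sub_nonneg.2 hτ1, hx0]) Real.pi_nonneg]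
  rw [hcomp, hvolAnn]
  rw [← ENNReal.ofReal_inv_of_pos (by positivity : (0:ℝ) < π * (D ^ 2 - ρ ^ 2)),
    ← ENNReal.ofReal_inv_of_pos (by positivity : (0:ℝ) < π * D ^ 2),
    ← ENNReal.ofReal_mul Real.pi_nonneg,
    ← ENNReal.ofReal_mul (by positivity : (0:ℝ) ≤ (π * D ^ 2)⁻¹),
    ← ENNReal.ofReal_mul (by positivity : (0:ℝ) ≤ (π * (D ^ 2 - ρ ^ 2))⁻¹)]
  congr 1
  -- now a real identity
  have hτval : τ = a ^ (1 / (m + 3)) / (γth ^ (1 / (m + 3)) * b ^ (1 / (m + 3))) := by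
    rw [hτdef, Real.div_rpow ha.le (by positivity), Real.mul_rpow hγ.le hb.le]
  have hJBmin' : JBmin = a * (c ^ 2 * (D ^ 2 + l ^ 2) ^ (-(m + 3))) := by
    rw [hJBmin, hvmin, mul_pow, rpow_sq_helper _ _ hX]
  have hJEmin' : JEmin = b * (c ^ 2 * (D ^ 2 + l ^ 2) ^ (-(m + 3))) := by
    rw [hJEmin, hvmin, mul_pow, rpow_sq_helper _ _ hX]
  have hJEmax' : JEmax = b * (c ^ 2 * (ρ ^ 2 + l ^ 2) ^ (-(m + 3))) := by
    rw [hJEmax, hvmid, mul_pow, rpow_sq_helper _ _ hY]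
  have hγinv : γth ^ (-1 / (m + 3)) = (γth ^ (1 / (m + 3)))⁻¹ := by
    rw [show (-1 / (m + 3) : ℝ) = -(1 / (m + 3)) by ring, Real.rpow_neg hγ.le]
  have hab : (a * b) ^ (1 / (m + 3)) = a ^ (1 / (m + 3)) * b ^ (1 / (m + 3)) :=
    Real.mul_rpow ha.le hb.le
  rw [hJBmin', hJEmin', hJEmax',
    rpow_helper a c _ (m + 3) ha hc hX hμ,
    rpow_helper b c _ (m + 3) hb hc hX hμ,
    rpow_helper b c _ (m + 3) hb hc hY hμ,
    rpow_helper2 b c _ (m + 3) hb hc hX hμ,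
    rpow_helper2 b c _ (m + 3) hb hc hY hμ,
    hγinv, hψ, hΞ₁, hΞ₂, hab, hτval]
  have hα : (0:ℝ) < a ^ (1 / (m + 3)) := Real.rpow_pos_of_pos ha _
  have hβ : (0:ℝ) < b ^ (1 / (m + 3)) := Real.rpow_pos_of_pos hb _
  have hg : (0:ℝ) < γth ^ (1 / (m + 3)) := Real.rpow_pos_of_pos hγ _
  have hκ : (0:ℝ) < c ^ (2 / (m + 3)) := Real.rpow_pos_of_pos hc _
  have hπ : (0:ℝ) < π := Real.pi_pos
  field_simp
  ring
end

section
/- (Theorem 3, case 4.) If χ²·v_max²/v_mid² < γ_th ≤ χ²·v_max²/v_min², then Pr(J_B ≤ γ_th·J_E) = S₃, where S₃ = ψ(m+3)²·J_{B,min}^{−1/(m+3)}·[J_{E,min}^{−1/(m+3)} − (J_{B,max}/γ_th)^{−1/(m+3)}] − (ψ/2)(m+3)²·γ_th^{−1/(m+3)}·[J_{E,min}^{−2/(m+3)} − (J_{B,max}/γ_th)^{−2/(m+3)}] + ψ(m+3)²·(J_{B,min}^{−1/(m+3)} − J_{B,max}^{−1/(m+3)})·[(J_{B,max}/γ_th)^{−1/(m+3)}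 − J_{E,max}^{−1/(m+3)}]. -/
open MeasureTheory ProbabilityTheory Metric Set

section Aux

lemma vol2 (r : ℝ) (hr : 0 ≤ r) :
    volume (closedBall (0 : EuclideanSpace ℝ (Fin 2)) r) = ENNReal.ofReal (Real.pi * r ^ 2) := by
  rw [EuclideanSpace.volume_closedBall]
  have h2 : (Fintype.card (Fin 2) : ℝ) / 2 + 1 = 2 := by norm_num
  rw [Fintype.card_fin] at *
  rw [h2, Real.Gamma_two]
  rw [← ENNReal.ofReal_pow hr, ← ENNReal.ofReal_mul (by positivity)]
  congr 1
  rw [Real.sq_sqrt Real.pi_nonneg]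
  ring

lemma vol2ball (r : ℝ) :
    volume (ball (0 : EuclideanSpace ℝ (Fin 2)) r) =
      volume (closedBall (0 : EuclideanSpace ℝ (Fin 2)) r) := by
  rw [MeasureTheory.Measure.addHaar_closedBall_eq_addHaar_ball]

lemma vol_annulus (R1 R2 : ℝ) (h1 : 0 ≤ R1) (h12 : R1 ≤ R2) :
    volume (closedBall (0 : EuclideanSpace ℝ (Fin 2)) R2 \ ball 0 R1) =
      ENNReal.ofReal (Real.pi * (R2 ^ 2 - R1 ^ 2)) := by
  rw [measure_diff (ball_subset_closedBall.trans (closedBall_subset_closedBall h12))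
      measurableSet_ball.nullMeasurableSet
      (by rw [vol2ball, vol2 _ h1]; exact ENNReal.ofReal_ne_top),
    vol2ball, vol2 _ h1, vol2 _ (h1.trans h12),
    ← ENNReal.ofReal_sub _ (by positivity)]
  ring_nf

lemma meas_normsq : Measurable (fun u : EuclideanSpace ℝ (Fin 2) => ‖u‖ ^ 2) :=
  (measurable_norm.pow_const 2)

lemma law_annulus (R1 R2 : ℝ) (h1 : 0 ≤ R1) (h12 : R1 < R2) :
    Measure.map (fun u : EuclideanSpace ℝ (Fin 2) => ‖u‖ ^ 2)
        ((volume (closedBall (0 : EuclideanSpace ℝ (Fin 2)) R2 \ ball 0 R1))⁻¹ •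
          volume.restrict (closedBall (0 : EuclideanSpace ℝ (Fin 2)) R2 \ ball 0 R1)) =
      (ENNReal.ofReal (R2 ^ 2 - R1 ^ 2))⁻¹ • volume.restrict (Icc (R1 ^ 2) (R2 ^ 2)) := by
  have hA : volume (closedBall (0 : EuclideanSpace ℝ (Fin 2)) R2 \ ball 0 R1) =
      ENNReal.ofReal (Real.pi * (R2 ^ 2 - R1 ^ 2)) := vol_annulus R1 R2 h1 h12.le
  have hsub : R1 ^ 2 < R2 ^ 2 := by nlinarith
  have hπ : (0:ℝ) < Real.pi := Real.pi_pos
  have hfin : IsFiniteMeasure (Measure.map (fun u : EuclideanSpace ℝ (Fin 2) => ‖u‖ ^ 2)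
      ((volume (closedBall (0 : EuclideanSpace ℝ (Fin 2)) R2 \ ball 0 R1))⁻¹ •
        volume.restrict (closedBall (0 : EuclideanSpace ℝ (Fin 2)) R2 \ ball 0 R1))) := by
    constructor
    rw [Measure.map_apply meas_normsq MeasurableSet.univ]
    simp only [Set.preimage_univ, Measure.smul_apply, smul_eq_mul,
      Measure.restrict_apply MeasurableSet.univ, Set.univ_inter, hA]
    exact ENNReal.mul_lt_top (ENNReal.inv_lt_top.2 (ENNReal.ofReal_pos.2 (by nlinarith)))
      ENNReal.ofReal_lt_top
  refine @Measure.ext_of_Iic ℝ _ _ _ _ _ _ _ _ hfin (fun x => ?_)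
  rw [Measure.map_apply meas_normsq measurableSet_Iic]
  simp only [Measure.smul_apply, smul_eq_mul,
    Measure.restrict_apply (meas_normsq measurableSet_Iic),
    Measure.restrict_apply measurableSet_Iic, hA]
  rcases lt_or_ge x (R1 ^ 2) with hx | hx
  · have e1 : (fun u : EuclideanSpace ℝ (Fin 2) => ‖u‖ ^ 2) ⁻¹' (Iic x) ∩
        (closedBall 0 R2 \ ball 0 R1) = ∅ := by
      ext u
      simp only [Set.mem_inter_iff, Set.mem_preimage, Set.mem_Iic, Set.mem_diff,
        mem_closedBall, mem_ball, dist_zero_right, Set.mem_empty_iff_false, iff_false]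
      rintro ⟨hu, -, hu2⟩
      push_neg at hu2
      nlinarith [norm_nonneg u]
    have e2 : Iic x ∩ Icc (R1 ^ 2) (R2 ^ 2) = ∅ := by
      ext t; simp only [Set.mem_inter_iff, Set.mem_Iic, Set.mem_Icc,
        Set.mem_empty_iff_false, iff_false]
      rintro ⟨ht, ht1, -⟩; linarith
    rw [e1, e2]; simp
  · have hx0 : (0:ℝ) ≤ x := le_trans (by positivity) hx
    have hsx : R1 ≤ Real.sqrt x := (Real.le_sqrt h1 hx0).2 hx
    have hball : (fun u : EuclideanSpace ℝ (Fin 2) => ‖u‖ ^ 2) ⁻¹' (Iic x) =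
        closedBall (0 : EuclideanSpace ℝ (Fin 2)) (Real.sqrt x) := by
      ext u
      simp only [Set.mem_preimage, Set.mem_Iic, mem_closedBall, dist_zero_right]
      exact (Real.le_sqrt (norm_nonneg u) hx0).symm
    rcases le_or_gt x (R2 ^ 2) with hx2 | hx2
    · have hsx2 : Real.sqrt x ≤ R2 := by
        rw [show R2 = Real.sqrt (R2 ^ 2) from (Real.sqrt_sq (h1.trans h12.le)).symm]
        exact Real.sqrt_le_sqrt hx2
      have e1 : closedBall (0 : EuclideanSpace ℝ (Fin 2)) (Real.sqrt x) ∩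
          (closedBall 0 R2 \ ball 0 R1) = closedBall 0 (Real.sqrt x) \ ball 0 R1 := by
        rw [Set.inter_diff_distrib_left, Set.inter_eq_left.2 (closedBall_subset_closedBall hsx2)]
        congr 1
        exact Set.inter_eq_right.2
          (fun u hu => (ball_subset_closedBall.trans (closedBall_subset_closedBall hsx)) hu)
      rw [hball, e1, vol_annulus R1 (Real.sqrt x) h1 hsx, Real.sq_sqrt hx0]
      have e2 : Iic x ∩ Icc (R1 ^ 2) (R2 ^ 2) = Icc (R1 ^ 2) x := by
        ext t
        simp only [Set.mem_inter_iff, Set.mem_Iic, Set.mem_Icc]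
        constructor
        · rintro ⟨h1, h2, h3⟩; exact ⟨h2, h1⟩
        · rintro ⟨h1, h2⟩; exact ⟨h2, h1, h2.trans hx2⟩
      rw [e2, Real.volume_Icc]
      rw [show (ENNReal.ofReal (Real.pi * (R2 ^ 2 - R1 ^ 2)))⁻¹ *
            ENNReal.ofReal (Real.pi * (x - R1 ^ 2)) =
          ENNReal.ofReal ((Real.pi * (x - R1 ^ 2)) / (Real.pi * (R2 ^ 2 - R1 ^ 2))) by
        rw [ENNReal.ofReal_div_of_pos (by nlinarith), ENNReal.div_eq_inv_mul]]
      rw [show (ENNReal.ofReal (R2 ^ 2 - R1 ^ 2))⁻¹ * ENNReal.ofReal (x - R1 ^ 2) =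
          ENNReal.ofReal ((x - R1 ^ 2) / (R2 ^ 2 - R1 ^ 2)) by
        rw [ENNReal.ofReal_div_of_pos (by nlinarith), ENNReal.div_eq_inv_mul]]
      congr 1
      rw [mul_div_mul_left _ _ (ne_of_gt hπ)]
    · have hsx2 : R2 ≤ Real.sqrt x := by
        rw [show R2 = Real.sqrt (R2 ^ 2) from (Real.sqrt_sq (h1.trans h12.le)).symm]
        exact Real.sqrt_le_sqrt hx2.le
      have e1 : closedBall (0 : EuclideanSpace ℝ (Fin 2)) (Real.sqrt x) ∩
          (closedBall 0 R2 \ ball 0 R1) = closedBall 0 R2 \ ball 0 R1 :=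
        Set.inter_eq_right.2 (fun u hu => (closedBall_subset_closedBall hsx2) hu.1)
      have e2 : Iic x ∩ Icc (R1 ^ 2) (R2 ^ 2) = Icc (R1 ^ 2) (R2 ^ 2) :=
        Set.inter_eq_right.2 (fun t ht => le_trans ht.2 hx2.le)
      rw [hball, e1, e2, hA, Real.volume_Icc,
        ENNReal.inv_mul_cancel (ENNReal.ofReal_pos.2 (by nlinarith)).ne' ENNReal.ofReal_ne_top,
        ENNReal.inv_mul_cancel (ENNReal.ofReal_pos.2 (by nlinarith)).ne' ENNReal.ofReal_ne_top]

lemma prob1d (D2 ρ2 l2 k : ℝ) (hρ2 : 0 ≤ ρ2) (hρD : ρ2 < D2) (hl2 : 0 < l2) (hk : 0 < k)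
    (h1 : k * (ρ2 + l2) < l2) (h2 : l2 ≤ k * (D2 + l2)) :
    (((ENNReal.ofReal D2)⁻¹ • volume.restrict (Icc (0:ℝ) D2)).prod
        ((ENNReal.ofReal (D2 - ρ2))⁻¹ • volume.restrict (Icc ρ2 D2)))
      {p : ℝ × ℝ | k * (p.2 + l2) ≤ p.1 + l2} =
    ENNReal.ofReal
      (((k * (D2 + l2) - l2) ^ 2 / (2 * k) + (k * (D2 + l2) - l2) * (l2 / k - l2 - ρ2) +
          (D2 - (k * (D2 + l2) - l2)) * (D2 - ρ2)) / (D2 * (D2 - ρ2))) := by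
  have hD2 : 0 < D2 := lt_of_le_of_lt hρ2 hρD
  have hk1 : k < 1 := by nlinarith
  set x0 : ℝ := k * (D2 + l2) - l2 with hx0def
  have hx00 : 0 ≤ x0 := by simp [hx0def]; linarith
  have hx0D : x0 ≤ D2 := by nlinarith
  have hAmeas : MeasurableSet {p : ℝ × ℝ | k * (p.2 + l2) ≤ p.1 + l2} := by
    apply IsClosed.measurableSet
    exact isClosed_le (by fun_prop) (by fun_prop)
  rw [Measure.prod_apply hAmeas]
  have hsec : ∀ x : ℝ, (Prod.mk x ⁻¹' {p : ℝ × ℝ | k * (p.2 + l2) ≤ p.1 + l2}) =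
      Iic ((x + l2) / k - l2) := by
    intro x
    ext y
    simp only [Set.mem_preimage, Set.mem_setOf_eq, Set.mem_Iic]
    rw [le_sub_iff_add_le, le_div_iff₀ hk]
    constructor <;> intro h <;> nlinarith
  have hμ2 : ∀ z : ℝ, ρ2 ≤ z →
      ((ENNReal.ofReal (D2 - ρ2))⁻¹ • volume.restrict (Icc ρ2 D2)) (Iic z) =
        ENNReal.ofReal ((min z D2 - ρ2) / (D2 - ρ2)) := by
    intro z hz
    rw [Measure.smul_apply, smul_eq_mul, Measure.restrict_apply measurableSet_Iic]
    have : Iic z ∩ Icc ρ2 D2 = Icc ρ2 (min z D2) := by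
      ext t
      simp only [Set.mem_inter_iff, Set.mem_Iic, Set.mem_Icc, le_min_iff]
      tauto
    rw [this, Real.volume_Icc, ENNReal.ofReal_div_of_pos (by linarith), ENNReal.div_eq_inv_mul]
  set g : ℝ → ℝ := fun x => (min ((x + l2) / k - l2) D2 - ρ2) / (D2 - ρ2) with hgdef
  have hgcont : Continuous g := by
    apply Continuous.div_const
    apply Continuous.sub _ continuous_const
    exact (Continuous.min (by fun_prop) continuous_const)
  have hzge : ∀ x : ℝ, 0 ≤ x → ρ2 ≤ (x + l2) / k - l2 := by
    intro x hx
    rw [le_sub_iff_add_le, le_div_iff₀ hk]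
    nlinarith
  have hint : ∫⁻ x, ((ENNReal.ofReal (D2 - ρ2))⁻¹ • volume.restrict (Icc ρ2 D2))
        (Prod.mk x ⁻¹' {p : ℝ × ℝ | k * (p.2 + l2) ≤ p.1 + l2})
      ∂((ENNReal.ofReal D2)⁻¹ • volume.restrict (Icc (0:ℝ) D2)) =
      (ENNReal.ofReal D2)⁻¹ * ∫⁻ x in Icc (0:ℝ) D2, ENNReal.ofReal (g x) := by
    rw [lintegral_smul_measure]
    congr 1
    apply setLIntegral_congr_fun measurableSet_Icc
    intro x hx
    dsimp only
    rw [hsec, hμ2 _ (hzge x hx.1)]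
  rw [hint]
  have hgint : IntegrableOn g (Icc 0 D2) volume := hgcont.integrableOn_Icc
  have hgnn : 0 ≤ᵐ[volume.restrict (Icc (0:ℝ) D2)] g := by
    apply (ae_restrict_iff' measurableSet_Icc).2
    apply ae_of_all
    intro x hx
    have := hzge x hx.1
    have hmin : ρ2 ≤ min ((x + l2) / k - l2) D2 := le_min this hρD.le
    simp only [hgdef, Pi.zero_apply]
    apply div_nonneg (by linarith) (by linarith)
  rw [← ofReal_integral_eq_lintegral_ofReal hgint hgnn]
  rw [show (ENNReal.ofReal D2)⁻¹ * ENNReal.ofReal (∫ x in Icc (0:ℝ) D2, g x) =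
      ENNReal.ofReal ((∫ x in Icc (0:ℝ) D2, g x) / D2) by
    rw [ENNReal.ofReal_div_of_pos hD2, ENNReal.div_eq_inv_mul]]
  congr 1
  rw [MeasureTheory.integral_Icc_eq_integral_Ioc, ← intervalIntegral.integral_of_le hD2.le]
  have hsplit : ∫ x in (0:ℝ)..D2, g x =
      (∫ x in (0:ℝ)..x0, g x) + ∫ x in x0..D2, g x :=
    (intervalIntegral.integral_add_adjacent_intervals
      (hgcont.intervalIntegrable _ _) (hgcont.intervalIntegrable _ _)).symm
  rw [hsplit]
  have e1 : ∫ x in (0:ℝ)..x0, g x =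
      ∫ x in (0:ℝ)..x0, ((1 / (k * (D2 - ρ2))) * x + (l2 / k - l2 - ρ2) / (D2 - ρ2)) := by
    apply intervalIntegral.integral_congr
    intro x hx
    rw [Set.uIcc_of_le hx00] at hx
    have hxle : (x + l2) / k - l2 ≤ D2 := by
      rw [sub_le_iff_le_add, div_le_iff₀ hk]
      nlinarith [hx.2]
    simp only [hgdef, min_eq_left hxle]
    field_simp
    ring
  have e2 : ∫ x in x0..D2, g x = (D2 - x0) * ((D2 - ρ2) / (D2 - ρ2)) := by
    rw [show (D2 - x0) * ((D2 - ρ2) / (D2 - ρ2)) =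
        (D2 - x0) • ((D2 - ρ2) / (D2 - ρ2)) from rfl]
    rw [← intervalIntegral.integral_const]
    apply intervalIntegral.integral_congr
    intro x hx
    rw [Set.uIcc_of_le hx0D] at hx
    have hxge : D2 ≤ (x + l2) / k - l2 := by
      rw [le_sub_iff_add_le, le_div_iff₀ hk]
      nlinarith [hx.1]
    simp only [hgdef, min_eq_right hxge]
  rw [e1, e2]
  rw [intervalIntegral.integral_add
      (by apply IntervalIntegrable.const_mul; exact continuous_id.intervalIntegrable _ _)
      intervalIntegrable_const,
    intervalIntegral.integral_const_mul, integral_id, intervalIntegral.integral_const]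
  have hD2ρ : D2 - ρ2 ≠ 0 := by linarith
  have hkne : k ≠ 0 := hk.ne'
  have hkD : k * (D2 - ρ2) ≠ 0 := mul_ne_zero hkne hD2ρ
  have hkD' : k * D2 - k * ρ2 ≠ 0 := by rw [← mul_sub]; exact hkD
  field_simp
  ring_nf
  field_simp
  ring

lemma sq_c_rpow (cc t q : ℝ) (hcc : 0 ≤ cc) (ht : 0 ≤ t) :
    (cc * t ^ (q / 2)) ^ 2 = cc ^ 2 * t ^ q := by
  rw [mul_pow]
  congr 1
  rw [← Real.rpow_natCast (t ^ (q / 2)) 2, ← Real.rpow_mul ht]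
  congr 1
  push_cast
  ring

lemma sq_c_rpow' (cc ll q : ℝ) (hcc : 0 ≤ cc) (hll : 0 ≤ ll) :
    (cc * ll ^ q) ^ 2 = cc ^ 2 * (ll ^ 2) ^ q := by
  rw [mul_pow]
  congr 1
  rw [← Real.rpow_natCast (ll ^ q) 2, ← Real.rpow_mul hll,
    ← Real.rpow_natCast ll 2, ← Real.rpow_mul hll]
  congr 1
  push_cast
  ring

lemma keyq (u cc t p : ℝ) (hu : 0 < u) (hc : 0 < cc) (ht : 0 < t) (hp : 0 < p) :
    (u * cc ^ 2 * t ^ (-p)) ^ (-1 / p) = u ^ (-1 / p) * cc ^ (-2 / p) * t := by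
  rw [Real.mul_rpow (by positivity) (Real.rpow_nonneg ht.le _),
    Real.mul_rpow hu.le (by positivity)]
  rw [← Real.rpow_natCast cc 2, ← Real.rpow_mul hc.le, ← Real.rpow_mul ht.le]
  rw [show (-p) * (-1 / p) = 1 by field_simp, Real.rpow_one,
    show ((2:ℕ):ℝ) * (-1 / p) = -2 / p by push_cast; ring]

lemma cancel_sq {a' c' T S g' : ℝ} (hc2 : 0 < c') (h : a' * c' * T ≤ g' * c' * S) :
    a' * T ≤ g' * S := by
  have h' : (a' * T) * c' ≤ (g' * S) * c' := by linarith only [h]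
  exact le_of_mul_le_mul_right h' hc2

end Aux

set_option maxHeartbeats 2000000 in
/-- Theorem 3, case 4: if `χ²·v_max²/v_mid² < γ_th ≤ χ²·v_max²/v_min²` (with `χ² = a/b`),
then `Pr(J_B ≤ γ_th·J_E) = S₃`. -/
theorem sop_case_four
    (D ρ l m c : ℝ) (hD : 0 < D) (hρ0 : 0 ≤ ρ) (hρD : ρ < D) (hl : 0 < l) (hm : 0 < m)
    (hc : 0 < c)
    (vmin vmid vmax : ℝ)
    (hvmin : vmin = c * (D ^ 2 + l ^ 2) ^ (-(m + 3) / 2))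
    (hvmid : vmid = c * (ρ ^ 2 + l ^ 2) ^ (-(m + 3) / 2))
    (hvmax : vmax = c * l ^ (-(m + 3)))
    (a b : ℝ) (ha : 0 < a) (hb : 0 < b)
    {Ω : Type*} [MeasureSpace Ω] [IsProbabilityMeasure (ℙ : Measure Ω)]
    (U W : Ω → EuclideanSpace ℝ (Fin 2)) (hU : Measurable U) (hW : Measurable W)
    (hUlaw : Measure.map U (ℙ : Measure Ω) =
      (volume (Metric.closedBall (0 : EuclideanSpace ℝ (Fin 2)) D))⁻¹ •
        volume.restrict (Metric.closedBall (0 : EuclideanSpace ℝ (Fin 2)) D))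
    (hWlaw : Measure.map W (ℙ : Measure Ω) =
      (volume (Metric.closedBall (0 : EuclideanSpace ℝ (Fin 2)) D \
          Metric.ball (0 : EuclideanSpace ℝ (Fin 2)) ρ))⁻¹ •
        volume.restrict (Metric.closedBall (0 : EuclideanSpace ℝ (Fin 2)) D \
          Metric.ball (0 : EuclideanSpace ℝ (Fin 2)) ρ))
    (hindep : IndepFun U W (ℙ : Measure Ω))
    (HB HE : Ω → ℝ)
    (hHB : ∀ ω, HB ω = c * (‖U ω‖ ^ 2 + l ^ 2) ^ (-(m + 3) / 2))
    (hHE : ∀ ω, HE ω = c * (‖W ω‖ ^ 2 + l ^ 2) ^ (-(m + 3) / 2))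
    (JB JE : Ω → ℝ)
    (hJB : ∀ ω, JB ω = a * HB ω ^ 2) (hJE : ∀ ω, JE ω = b * HE ω ^ 2)
    (γth : ℝ) (hγ : 0 < γth)
    (Ξ₁ Ξ₂ ψ : ℝ)
    (hΞ₁ : Ξ₁ = 2 / ((m + 3) * D ^ 2) * c ^ (2 / (m + 3)))
    (hΞ₂ : Ξ₂ = 2 / ((m + 3) * (D ^ 2 - ρ ^ 2)) * c ^ (2 / (m + 3)))
    (hψ : ψ = Ξ₁ * Ξ₂ / 4 * (a * b) ^ (1 / (m + 3)))
    (JBmin JBmax JEmin JEmax : ℝ)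
    (hJBmin : JBmin = a * vmin ^ 2) (hJBmax : JBmax = a * vmax ^ 2)
    (hJEmin : JEmin = b * vmin ^ 2) (hJEmax : JEmax = b * vmid ^ 2)
    (hcase₁ : a / b * vmax ^ 2 / vmid ^ 2 < γth) (hcase₂ : γth ≤ a / b * vmax ^ 2 / vmin ^ 2) :
    (ℙ : Measure Ω) {ω | JB ω ≤ γth * JE ω} =
      ENNReal.ofReal
        (ψ * (m + 3) ^ 2 * JBmin ^ (-1 / (m + 3)) *
            (JEmin ^ (-1 / (m + 3)) - (JBmax / γth) ^ (-1 / (m + 3))) -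
          ψ / 2 * (m + 3) ^ 2 * γth ^ (-1 / (m + 3)) *
            (JEmin ^ (-2 / (m + 3)) - (JBmax / γth) ^ (-2 / (m + 3))) +
          ψ * (m + 3) ^ 2 * (JBmin ^ (-1 / (m + 3)) - JBmax ^ (-1 / (m + 3))) *
            ((JBmax / γth) ^ (-1 / (m + 3)) - JEmax ^ (-1 / (m + 3)))) := by
  have hp : (0:ℝ) < m + 3 := by linarith
  have hpne : (m + 3 : ℝ) ≠ 0 := hp.ne'
  have hDl : (0:ℝ) < D ^ 2 + l ^ 2 := by positivity
  have hρl : (0:ℝ) < ρ ^ 2 + l ^ 2 := by positivity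
  have hl2 : (0:ℝ) < l ^ 2 := by positivity
  have hD2 : (0:ℝ) < D ^ 2 := by positivity
  have hDρ : ρ ^ 2 < D ^ 2 := by
    have := mul_self_lt_mul_self hρ0 hρD
    calc ρ ^ 2 = ρ * ρ := sq ρ
      _ < D * D := this
      _ = D ^ 2 := (sq D).symm
  set k : ℝ := (a / (γth * b)) ^ (1 / (m + 3)) with hkdef
  have hab0 : 0 < a / (γth * b) := by positivity
  have hk : 0 < k := Real.rpow_pos_of_pos hab0 _
  -- squared channel-gain identities
  have hvmin2 : vmin ^ 2 = c ^ 2 * (D ^ 2 + l ^ 2) ^ (-(m + 3)) := by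
    rw [hvmin, sq_c_rpow c _ _ hc.le hDl.le]
  have hvmid2 : vmid ^ 2 = c ^ 2 * (ρ ^ 2 + l ^ 2) ^ (-(m + 3)) := by
    rw [hvmid, sq_c_rpow c _ _ hc.le hρl.le]
  have hvmax2 : vmax ^ 2 = c ^ 2 * (l ^ 2) ^ (-(m + 3)) := by
    rw [hvmax, sq_c_rpow' c l _ hc.le hl.le]
  -- positivity of powers
  have hLp : 0 < (l ^ 2) ^ (m + 3) := Real.rpow_pos_of_pos hl2 _
  have hRp : 0 < (ρ ^ 2 + l ^ 2) ^ (m + 3) := Real.rpow_pos_of_pos hρl _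
  have hDp : 0 < (D ^ 2 + l ^ 2) ^ (m + 3) := Real.rpow_pos_of_pos hDl _
  -- the case conditions, translated to bounds on k
  have hratio1 : a / b * vmax ^ 2 / vmid ^ 2 =
      (a * (ρ ^ 2 + l ^ 2) ^ (m + 3)) / (b * (l ^ 2) ^ (m + 3)) := by
    rw [hvmax2, hvmid2, Real.rpow_neg hl2.le, Real.rpow_neg hρl.le]
    field_simp
  have hratio2 : a / b * vmax ^ 2 / vmin ^ 2 =
      (a * (D ^ 2 + l ^ 2) ^ (m + 3)) / (b * (l ^ 2) ^ (m + 3)) := by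
    rw [hvmax2, hvmin2, Real.rpow_neg hl2.le, Real.rpow_neg hDl.le]
    field_simp
  rw [hratio1] at hcase₁
  rw [hratio2] at hcase₂
  have hk1 : k * (ρ ^ 2 + l ^ 2) < l ^ 2 := by
    have hc1 : a / (γth * b) < (l ^ 2 / (ρ ^ 2 + l ^ 2)) ^ (m + 3) := by
      rw [Real.div_rpow hl2.le hρl.le, div_lt_div_iff₀ (by positivity) hRp]
      rw [div_lt_iff₀ (by positivity)] at hcase₁
      linarith only [hcase₁]
    have hklt : k < l ^ 2 / (ρ ^ 2 + l ^ 2) := by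
      calc k = (a / (γth * b)) ^ (1 / (m + 3)) := rfl
        _ < ((l ^ 2 / (ρ ^ 2 + l ^ 2)) ^ (m + 3)) ^ (1 / (m + 3)) :=
            Real.rpow_lt_rpow hab0.le hc1 (by positivity)
        _ = l ^ 2 / (ρ ^ 2 + l ^ 2) := by
            rw [one_div, Real.rpow_rpow_inv (by positivity) hpne]
    exact (lt_div_iff₀ hρl).1 hklt
  have hk2 : l ^ 2 ≤ k * (D ^ 2 + l ^ 2) := by
    have hc2 : (l ^ 2 / (D ^ 2 + l ^ 2)) ^ (m + 3) ≤ a / (γth * b) := by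
      rw [Real.div_rpow hl2.le hDl.le, div_le_div_iff₀ hDp (by positivity)]
      rw [le_div_iff₀ (by positivity)] at hcase₂
      linarith only [hcase₂]
    have hkge : l ^ 2 / (D ^ 2 + l ^ 2) ≤ k := by
      calc l ^ 2 / (D ^ 2 + l ^ 2)
          = ((l ^ 2 / (D ^ 2 + l ^ 2)) ^ (m + 3)) ^ (1 / (m + 3)) := by
            rw [one_div, Real.rpow_rpow_inv (by positivity) hpne]
        _ ≤ (a / (γth * b)) ^ (1 / (m + 3)) :=
            Real.rpow_le_rpow (by positivity) hc2 (by positivity)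
        _ = k := rfl
    exact (div_le_iff₀ hDl).1 hkge
  -- the event in terms of squared norms
  have hkp : k ^ (m + 3) = a / (γth * b) := by
    rw [hkdef, one_div, Real.rpow_inv_rpow hab0.le hpne]
  have hiff : ∀ ω, (JB ω ≤ γth * JE ω ↔ k * (‖W ω‖ ^ 2 + l ^ 2) ≤ ‖U ω‖ ^ 2 + l ^ 2) := by
    intro ω
    rw [hJB, hJE, hHB, hHE]
    have hs : (0:ℝ) < ‖U ω‖ ^ 2 + l ^ 2 := by positivity
    have ht : (0:ℝ) < ‖W ω‖ ^ 2 + l ^ 2 := by positivity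
    rw [sq_c_rpow c _ _ hc.le hs.le, sq_c_rpow c _ _ hc.le ht.le,
      Real.rpow_neg hs.le, Real.rpow_neg ht.le]
    have hS : 0 < (‖U ω‖ ^ 2 + l ^ 2) ^ (m + 3) := Real.rpow_pos_of_pos hs _
    have hT : 0 < (‖W ω‖ ^ 2 + l ^ 2) ^ (m + 3) := Real.rpow_pos_of_pos ht _
    rw [show a * (c ^ 2 * ((‖U ω‖ ^ 2 + l ^ 2) ^ (m + 3))⁻¹) =
        (a * c ^ 2) / ((‖U ω‖ ^ 2 + l ^ 2) ^ (m + 3)) by ring,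
      show γth * (b * (c ^ 2 * ((‖W ω‖ ^ 2 + l ^ 2) ^ (m + 3))⁻¹)) =
        (γth * b * c ^ 2) / ((‖W ω‖ ^ 2 + l ^ 2) ^ (m + 3)) by ring,
      div_le_div_iff₀ hS hT]
    have hc2 : (0:ℝ) < c ^ 2 := by positivity
    constructor
    · intro h
      have hTS : (k * (‖W ω‖ ^ 2 + l ^ 2)) ^ (m + 3) ≤ (‖U ω‖ ^ 2 + l ^ 2) ^ (m + 3) := by
        rw [Real.mul_rpow hk.le ht.le, hkp, div_mul_eq_mul_div, div_le_iff₀ (by positivity)]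
        have h' : a * (‖W ω‖ ^ 2 + l ^ 2) ^ (m + 3) ≤
            (γth * b) * (‖U ω‖ ^ 2 + l ^ 2) ^ (m + 3) := by
          apply cancel_sq hc2
          linarith only [h]
        linarith only [h']
      exact (Real.rpow_le_rpow_iff (by positivity) hs.le hp).1 hTS
    · intro h
      have hTS : (k * (‖W ω‖ ^ 2 + l ^ 2)) ^ (m + 3) ≤ (‖U ω‖ ^ 2 + l ^ 2) ^ (m + 3) :=
        Real.rpow_le_rpow (by positivity) h hp.le
      rw [Real.mul_rpow hk.le ht.le, hkp, div_mul_eq_mul_div, div_le_iff₀ (by positivity)] at hTS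
      have h' : (a * (‖W ω‖ ^ 2 + l ^ 2) ^ (m + 3)) * c ^ 2 ≤
          ((γth * b) * (‖U ω‖ ^ 2 + l ^ 2) ^ (m + 3)) * c ^ 2 := by
        apply mul_le_mul_of_nonneg_right _ hc2.le
        linarith only [hTS]
      linarith only [h']
  have hevent : {ω | JB ω ≤ γth * JE ω} =
      (fun ω => (‖U ω‖ ^ 2, ‖W ω‖ ^ 2)) ⁻¹'
        {q : ℝ × ℝ | k * (q.2 + l ^ 2) ≤ q.1 + l ^ 2} := by
    ext ω
    simpa using hiff ω
  -- measurability and independence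
  have hX : Measurable (fun ω => ‖U ω‖ ^ 2) := meas_normsq.comp hU
  have hY : Measurable (fun ω => ‖W ω‖ ^ 2) := meas_normsq.comp hW
  have hXY : IndepFun (fun ω => ‖U ω‖ ^ 2) (fun ω => ‖W ω‖ ^ 2) (ℙ : Measure Ω) :=
    hindep.comp meas_normsq meas_normsq
  have hmapeq : Measure.map (fun ω => (‖U ω‖ ^ 2, ‖W ω‖ ^ 2)) (ℙ : Measure Ω) =
      (Measure.map (fun ω => ‖U ω‖ ^ 2) (ℙ : Measure Ω)).prod
        (Measure.map (fun ω => ‖W ω‖ ^ 2) (ℙ : Measure Ω)) :=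
    (ProbabilityTheory.indepFun_iff_map_prod_eq_prod_map_map
      hX.aemeasurable hY.aemeasurable).1 hXY
  -- laws of the squared norms
  have hlawX : Measure.map (fun ω => ‖U ω‖ ^ 2) (ℙ : Measure Ω) =
      (ENNReal.ofReal (D ^ 2))⁻¹ • volume.restrict (Icc (0:ℝ) (D ^ 2)) := by
    have h1 : Measure.map (fun ω => ‖U ω‖ ^ 2) (ℙ : Measure Ω) =
        Measure.map (fun u : EuclideanSpace ℝ (Fin 2) => ‖u‖ ^ 2)
          (Measure.map U (ℙ : Measure Ω)) := (Measure.map_map meas_normsq hU).symm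
    rw [h1, hUlaw,
      show closedBall (0 : EuclideanSpace ℝ (Fin 2)) D =
          closedBall (0 : EuclideanSpace ℝ (Fin 2)) D \ ball 0 0 by
        rw [Metric.ball_zero, diff_empty],
      law_annulus 0 D le_rfl hD]
    norm_num
  have hlawY : Measure.map (fun ω => ‖W ω‖ ^ 2) (ℙ : Measure Ω) =
      (ENNReal.ofReal (D ^ 2 - ρ ^ 2))⁻¹ • volume.restrict (Icc (ρ ^ 2) (D ^ 2)) := by
    have h1 : Measure.map (fun ω => ‖W ω‖ ^ 2) (ℙ : Measure Ω) =
        Measure.map (fun u : EuclideanSpace ℝ (Fin 2) => ‖u‖ ^ 2)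
          (Measure.map W (ℙ : Measure Ω)) := (Measure.map_map meas_normsq hW).symm
    rw [h1, hWlaw, law_annulus ρ D hρ0 hρD]
  have hAmeas : MeasurableSet {q : ℝ × ℝ | k * (q.2 + l ^ 2) ≤ q.1 + l ^ 2} := by
    apply IsClosed.measurableSet
    exact isClosed_le (by fun_prop) (by fun_prop)
  rw [hevent, ← Measure.map_apply (hX.prodMk hY) hAmeas, hmapeq, hlawX, hlawY,
    prob1d (D ^ 2) (ρ ^ 2) (l ^ 2) k (by positivity) hDρ hl2 hk hk1 hk2]
  congr 1
  -- now the pure real-number computation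
  have hJBmin' : JBmin = a * c ^ 2 * (D ^ 2 + l ^ 2) ^ (-(m + 3)) := by
    rw [hJBmin, hvmin2]; ring
  have hJBmax' : JBmax = a * c ^ 2 * (l ^ 2) ^ (-(m + 3)) := by
    rw [hJBmax, hvmax2]; ring
  have hJEmin' : JEmin = b * c ^ 2 * (D ^ 2 + l ^ 2) ^ (-(m + 3)) := by
    rw [hJEmin, hvmin2]; ring
  have hJEmax' : JEmax = b * c ^ 2 * (ρ ^ 2 + l ^ 2) ^ (-(m + 3)) := by
    rw [hJEmax, hvmid2]; ring
  have hJBγ : JBmax / γth = (a / γth) * c ^ 2 * (l ^ 2) ^ (-(m + 3)) := by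
    rw [hJBmax']; ring
  -- basic rpow atoms
  set A1 : ℝ := a ^ (1 / (m + 3)) with hA1def
  set B1 : ℝ := b ^ (1 / (m + 3)) with hB1def
  set C2 : ℝ := c ^ (2 / (m + 3)) with hC2def
  set γ1 : ℝ := γth ^ (1 / (m + 3)) with hγ1def
  have hA1 : 0 < A1 := Real.rpow_pos_of_pos ha _
  have hB1 : 0 < B1 := Real.rpow_pos_of_pos hb _
  have hC2 : 0 < C2 := Real.rpow_pos_of_pos hc _
  have hγ1 : 0 < γ1 := Real.rpow_pos_of_pos hγ _
  have hanr : a ^ (-1 / (m + 3)) = A1⁻¹ := by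
    rw [hA1def, show (-1 / (m + 3) : ℝ) = -(1 / (m + 3)) by ring, Real.rpow_neg ha.le]
  have hbnr : b ^ (-1 / (m + 3)) = B1⁻¹ := by
    rw [hB1def, show (-1 / (m + 3) : ℝ) = -(1 / (m + 3)) by ring, Real.rpow_neg hb.le]
  have hcnr : c ^ (-2 / (m + 3)) = C2⁻¹ := by
    rw [hC2def, show (-2 / (m + 3) : ℝ) = -(2 / (m + 3)) by ring, Real.rpow_neg hc.le]
  have hγnr : γth ^ (-1 / (m + 3)) = γ1⁻¹ := by
    rw [hγ1def, show (-1 / (m + 3) : ℝ) = -(1 / (m + 3)) by ring, Real.rpow_neg hγ.le]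
  have haγ : (a / γth) ^ (-1 / (m + 3)) = γ1 / A1 := by
    rw [Real.div_rpow ha.le hγ.le, hanr, hγnr]
    field_simp
  -- the k-identity
  have hk' : k = A1 / (γ1 * B1) := by
    rw [hkdef, show a / (γth * b) = a / γth / b by ring,
      Real.div_rpow (by positivity) hb.le, Real.div_rpow ha.le hγ.le]
    rw [hA1def, hB1def, hγ1def]
    ring
  -- the ψ-identity
  have habr : (a * b) ^ (1 / (m + 3)) = A1 * B1 := Real.mul_rpow ha.le hb.le
  have hψ' : ψ = A1 * B1 * C2 ^ 2 / ((m + 3) ^ 2 * (D ^ 2 * (D ^ 2 - ρ ^ 2))) := by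
    have hne1 : ((m + 3) * D ^ 2) ≠ 0 := by positivity
    have hne2 : ((m + 3) * (D ^ 2 - ρ ^ 2)) ≠ 0 :=
      mul_ne_zero hpne (sub_ne_zero.2 hDρ.ne')
    have hne3 : (D ^ 2 - ρ ^ 2) ≠ 0 := sub_ne_zero.2 hDρ.ne'
    rw [hψ, hΞ₁, hΞ₂, habr, hC2def]
    field_simp
    ring
  -- the main rpow identities
  have hq1 : JBmin ^ (-1 / (m + 3)) = A1⁻¹ * C2⁻¹ * (D ^ 2 + l ^ 2) := by
    rw [hJBmin', keyq a c _ _ ha hc hDl hp, hanr, hcnr]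
  have hq2 : JBmax ^ (-1 / (m + 3)) = A1⁻¹ * C2⁻¹ * l ^ 2 := by
    rw [hJBmax', keyq a c _ _ ha hc hl2 hp, hanr, hcnr]
  have hq3 : JEmin ^ (-1 / (m + 3)) = B1⁻¹ * C2⁻¹ * (D ^ 2 + l ^ 2) := by
    rw [hJEmin', keyq b c _ _ hb hc hDl hp, hbnr, hcnr]
  have hq4 : JEmax ^ (-1 / (m + 3)) = B1⁻¹ * C2⁻¹ * (ρ ^ 2 + l ^ 2) := by
    rw [hJEmax', keyq b c _ _ hb hc hρl hp, hbnr, hcnr]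
  have hq5 : (JBmax / γth) ^ (-1 / (m + 3)) = γ1 / A1 * C2⁻¹ * l ^ 2 := by
    rw [hJBγ, keyq (a / γth) c _ _ (by positivity) hc hl2 hp, haγ, hcnr]
  have hJEminpos : 0 < JEmin := by rw [hJEmin']; positivity
  have hJBγpos : 0 < JBmax / γth := by rw [hJBγ]; positivity
  have hq7 : JEmin ^ (-2 / (m + 3)) = (B1⁻¹ * C2⁻¹ * (D ^ 2 + l ^ 2)) ^ 2 := by
    rw [← hq3, ← Real.rpow_natCast (JEmin ^ (-1 / (m + 3))) 2, ← Real.rpow_mul hJEminpos.le]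
    congr 1
    push_cast
    ring
  have hq8 : (JBmax / γth) ^ (-2 / (m + 3)) = (γ1 / A1 * C2⁻¹ * l ^ 2) ^ 2 := by
    rw [← hq5, ← Real.rpow_natCast ((JBmax / γth) ^ (-1 / (m + 3))) 2,
      ← Real.rpow_mul hJBγpos.le]
    congr 1
    push_cast
    ring
  rw [hq1, hq2, hq3, hq4, hq5, hq7, hq8, hγnr, hψ', hk']
  have hD2ρ : D ^ 2 - ρ ^ 2 ≠ 0 := sub_ne_zero.2 hDρ.ne'
  field_simp
  ring
end

section
/- (Equation (19), case 5.) If χ ≥ v_mid/v_min, then χ·H_B ≥ H_E holds almost surely, and the average secrecy capacity equals E[C_s] = E[(1/2)·ln((1 + a·H_B²)/(1 + b·H_E²))], i.e., the double integral ∫_{v_min}^{v_max} ∫_{v_min}^{v_mid} (1/2)·ln((1 + a x²)/(1 + b y²)) · f_{H_B}(x) · f_{H_E}(y) dy dx, where f_{H_B}(x) = Ξ₁ x^{−2/(m+3)−1} and f_{H_E}(y) = Ξ₂ y^{−2/(m+3)−1}. -/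
open MeasureTheory ProbabilityTheory Metric Set intervalIntegral

private lemma phi_deriv' (l m c : ℝ) (hl : 0 < l) (r : ℝ) :
    HasDerivAt (fun r : ℝ => c * (r ^ 2 + l ^ 2) ^ (-(m + 3) / 2))
      (-(c * (m + 3)) * r * (r ^ 2 + l ^ 2) ^ (-(m + 3) / 2 - 1)) r := by
  have ht : (0:ℝ) < r ^ 2 + l ^ 2 := by positivity
  have h1 : HasDerivAt (fun r : ℝ => r ^ 2 + l ^ 2) (2 * r) r := by
    simpa using ((hasDerivAt_pow 2 r).add_const (l ^ 2))
  have h2 : HasDerivAt (fun t : ℝ => t ^ (-(m + 3) / 2))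
      ((-(m + 3) / 2) * (r ^ 2 + l ^ 2) ^ (-(m + 3) / 2 - 1)) (r ^ 2 + l ^ 2) :=
    Real.hasDerivAt_rpow_const (Or.inl ht.ne')
  have := (h2.comp r h1).const_mul c
  refine this.congr_deriv ?_
  ring

private lemma phi_ptwise' (l m c : ℝ) (hl : 0 < l) (hm : 0 < m) (hc : 0 < c)
    (g : ℝ → ℝ) (r : ℝ) :
    (-(c * (m + 3)) * r * (r ^ 2 + l ^ 2) ^ (-(m + 3) / 2 - 1)) *
      (-(c ^ (2 / (m + 3)) / (m + 3)) *
        (g (c * (r ^ 2 + l ^ 2) ^ (-(m + 3) / 2)) *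
          (c * (r ^ 2 + l ^ 2) ^ (-(m + 3) / 2)) ^ (-2 / (m + 3) - 1)))
      = r * g (c * (r ^ 2 + l ^ 2) ^ (-(m + 3) / 2)) := by
  have ht : (0:ℝ) < r ^ 2 + l ^ 2 := by positivity
  have hm3 : (0:ℝ) < m + 3 := by linarith
  set t := r ^ 2 + l ^ 2
  have e1 : (c * t ^ (-(m + 3) / 2)) ^ (-2 / (m + 3) - 1)
      = c ^ (-2 / (m + 3) - 1) * t ^ ((-(m + 3) / 2) * (-2 / (m + 3) - 1)) := by
    rw [Real.mul_rpow hc.le (Real.rpow_nonneg ht.le _), ← Real.rpow_mul ht.le]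
  rw [e1]
  have e2 : t ^ (-(m + 3) / 2 - 1) * t ^ ((-(m + 3) / 2) * (-2 / (m + 3) - 1)) = 1 := by
    rw [← Real.rpow_add ht]
    have : -(m + 3) / 2 - 1 + -(m + 3) / 2 * (-2 / (m + 3) - 1) = 0 := by
      field_simp
      ring
    rw [this, Real.rpow_zero]
  have e3 : c * c ^ (2 / (m + 3)) * c ^ (-2 / (m + 3) - 1) = 1 := by
    rw [show c * c ^ (2 / (m + 3)) * c ^ (-2 / (m + 3) - 1)
        = c ^ (1:ℝ) * c ^ (2 / (m + 3)) * c ^ (-2 / (m + 3) - 1) by rw [Real.rpow_one],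
      ← Real.rpow_add hc, ← Real.rpow_add hc,
      show 1 + 2 / (m + 3) + (-2 / (m + 3) - 1) = 0 by ring, Real.rpow_zero]
  calc (-(c * (m + 3)) * r * t ^ (-(m + 3) / 2 - 1)) *
      (-(c ^ (2 / (m + 3)) / (m + 3)) *
        (g (c * t ^ (-(m + 3) / 2)) *
          (c ^ (-2 / (m + 3) - 1) * t ^ ((-(m + 3) / 2) * (-2 / (m + 3) - 1)))))
      = (c * c ^ (2 / (m + 3)) * c ^ (-2 / (m + 3) - 1)) * ((m+3)/(m+3)) *
          (t ^ (-(m + 3) / 2 - 1) * t ^ ((-(m + 3) / 2) * (-2 / (m + 3) - 1))) *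
          (r * g (c * t ^ (-(m + 3) / 2))) := by ring
    _ = _ := by rw [e2, e3, div_self hm3.ne']; ring

private lemma subst_lemma' (l m c ρ D : ℝ) (hl : 0 < l) (hm : 0 < m) (hc : 0 < c)
    (hρ0 : 0 ≤ ρ) (hρD : ρ < D)
    (g : ℝ → ℝ) (hg : Continuous g) :
    ∫ r in ρ..D, r * g (c * (r ^ 2 + l ^ 2) ^ (-(m + 3) / 2))
      = (c ^ (2 / (m + 3)) / (m + 3)) *
        ∫ x in (c * (D ^ 2 + l ^ 2) ^ (-(m + 3) / 2))..(c * (ρ ^ 2 + l ^ 2) ^ (-(m + 3) / 2)),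
          g x * x ^ (-2 / (m + 3) - 1) := by
  set φ : ℝ → ℝ := fun r => c * (r ^ 2 + l ^ 2) ^ (-(m + 3) / 2) with hφ
  set φ' : ℝ → ℝ := fun r => -(c * (m + 3)) * r * (r ^ 2 + l ^ 2) ^ (-(m + 3) / 2 - 1) with hφ'
  set h : ℝ → ℝ := fun x => -(c ^ (2 / (m + 3)) / (m + 3)) * (g x * x ^ (-2 / (m + 3) - 1))
    with hh
  have hφpos : ∀ r : ℝ, 0 < φ r := by
    intro r
    have : (0:ℝ) < r ^ 2 + l ^ 2 := by positivity
    exact mul_pos hc (Real.rpow_pos_of_pos this _)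
  have hφ'c : Continuous φ' := by
    apply Continuous.mul (by fun_prop)
    apply Continuous.rpow_const (by fun_prop)
    intro r; exact Or.inl (by positivity)
  have hhc : ContinuousOn h {x : ℝ | 0 < x} := by
    apply ContinuousOn.mul continuousOn_const
    apply ContinuousOn.mul hg.continuousOn
    intro x hx
    exact (Real.continuousAt_rpow_const x _ (Or.inl (ne_of_gt hx))).continuousWithinAt
  have key : ∫ r in ρ..D, φ' r • (h ∘ φ) r = ∫ u in φ ρ..φ D, h u := by
    apply integral_comp_smul_deriv'' (f := φ) (f' := φ')
    · exact fun r _ => (phi_deriv' l m c hl r).continuousAt.continuousWithinAt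
    · exact fun r _ => (phi_deriv' l m c hl r).hasDerivWithinAt
    · exact hφ'c.continuousOn
    · exact hhc.mono (by rintro x ⟨r, _, rfl⟩; exact hφpos r)
  have lhs_eq : ∫ r in ρ..D, r * g (φ r) = ∫ r in ρ..D, φ' r • (h ∘ φ) r := by
    apply intervalIntegral.integral_congr
    intro r _
    simp only [smul_eq_mul, Function.comp]
    exact (phi_ptwise' l m c hl hm hc g r).symm
  rw [lhs_eq, key]
  have : ∫ u in φ ρ..φ D, h u
      = -(c ^ (2 / (m + 3)) / (m + 3)) * ∫ u in φ ρ..φ D, g u * u ^ (-2 / (m + 3) - 1) := by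
    rw [← intervalIntegral.integral_const_mul]
  rw [this, intervalIntegral.integral_symm]
  ring

private lemma annulus_volume' (D ρ : ℝ) (hD : 0 < D) (hρ0 : 0 ≤ ρ) (hρD : ρ < D) :
    volume (closedBall (0 : EuclideanSpace ℝ (Fin 2)) D \ ball 0 ρ)
      = ENNReal.ofReal (Real.pi * (D ^ 2 - ρ ^ 2)) := by
  have hsub : ball (0 : EuclideanSpace ℝ (Fin 2)) ρ ⊆ closedBall 0 D :=
    (ball_subset_ball hρD.le).trans ball_subset_closedBall
  rw [measure_diff hsub measurableSet_ball.nullMeasurableSet measure_ball_lt_top.ne,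
    EuclideanSpace.volume_closedBall, EuclideanSpace.volume_ball]
  have hΓ : Real.Gamma ((Fintype.card (Fin 2) : ℝ) / 2 + 1) = 1 := by
    norm_num [Real.Gamma_two]
  rw [hΓ]
  have hπ : Real.sqrt Real.pi ^ Fintype.card (Fin 2) = Real.pi := by
    simp [Real.sq_sqrt Real.pi_pos.le]
  rw [hπ]
  rw [← ENNReal.ofReal_pow hD.le, ← ENNReal.ofReal_pow hρ0]
  rw [← ENNReal.ofReal_mul (by positivity), ← ENNReal.ofReal_mul (by positivity),
    ← ENNReal.ofReal_sub _ (by positivity)]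
  norm_num
  ring_nf

private lemma polar' (D ρ l m c : ℝ) (hρ0 : 0 ≤ ρ) (hρD : ρ < D) :
    ∀ g : ℝ → ℝ,
    ∫ u in (closedBall (0 : EuclideanSpace ℝ (Fin 2)) D \ ball 0 ρ),
        g (c * (‖u‖ ^ 2 + l ^ 2) ^ (-(m + 3) / 2))
      = 2 * Real.pi * ∫ r in ρ..D, r * g (c * (r ^ 2 + l ^ 2) ^ (-(m + 3) / 2)) := by
  intro g
  set F : ℝ → ℝ := fun r => g (c * (r ^ 2 + l ^ 2) ^ (-(m + 3) / 2)) with hF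
  set S : Set (EuclideanSpace ℝ (Fin 2)) := closedBall 0 D \ ball 0 ρ with hS
  have hSm : MeasurableSet S := measurableSet_closedBall.diff measurableSet_ball
  have h1 : ∫ u in S, F ‖u‖ = ∫ u : EuclideanSpace ℝ (Fin 2), indicator (Icc ρ D) F ‖u‖ := by
    rw [← MeasureTheory.integral_indicator hSm]
    congr 1
    funext u
    have : u ∈ S ↔ ‖u‖ ∈ Icc ρ D := by
      simp [hS, mem_closedBall_zero_iff, mem_ball_zero_iff, not_lt, and_comm]
    by_cases h : u ∈ S
    · rw [indicator_of_mem h, indicator_of_mem (this.mp h)]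
    · rw [indicator_of_notMem h, indicator_of_notMem (fun hh => h (this.mpr hh))]
  rw [h1, MeasureTheory.integral_fun_norm_addHaar volume (indicator (Icc ρ D) F)]
  have hdim : Module.finrank ℝ (EuclideanSpace ℝ (Fin 2)) = 2 := by
    simp [finrank_euclideanSpace]
  rw [hdim]
  have hball : (volume (ball (0 : EuclideanSpace ℝ (Fin 2)) 1)).toReal = Real.pi := by
    rw [EuclideanSpace.volume_ball]
    have hΓ : Real.Gamma ((Fintype.card (Fin 2) : ℝ) / 2 + 1) = 1 := by
      norm_num [Real.Gamma_two]
    rw [hΓ]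
    simp [Real.sq_sqrt Real.pi_pos.le, ENNReal.toReal_ofReal Real.pi_pos.le]
  rw [measureReal_def, hball]
  have h2 : ∫ y in Set.Ioi (0:ℝ), y ^ (2 - 1) • indicator (Icc ρ D) F y
      = ∫ r in ρ..D, r * F r := by
    have e1 : ∀ y : ℝ, y ^ (2 - 1) • indicator (Icc ρ D) F y
        = indicator (Icc ρ D) (fun r => r * F r) y := by
      intro y
      simp only [pow_one, smul_eq_mul, indicator]
      split <;> simp
    simp only [e1]
    rw [MeasureTheory.integral_indicator measurableSet_Icc,
      Measure.restrict_restrict measurableSet_Icc]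
    have hae : (Icc ρ D ∩ Set.Ioi 0 : Set ℝ) =ᵐ[volume] (Set.Ioc ρ D : Set ℝ) := by
      rw [Filter.eventuallyEq_set]
      have h0 : ∀ᵐ y : ℝ ∂volume, y ≠ ρ := by
        simpa using (ae_iff.2 (by simp [Real.volume_singleton] :
          volume {y : ℝ | ¬ y ≠ ρ} = 0))
      filter_upwards [h0] with y hy
      constructor
      · rintro ⟨⟨h1', h2'⟩, _⟩; exact ⟨lt_of_le_of_ne h1' (Ne.symm hy), h2'⟩
      · rintro ⟨h1', h2'⟩; exact ⟨⟨h1'.le, h2'⟩, lt_of_le_of_lt hρ0 h1'⟩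
    rw [Measure.restrict_congr_set hae, ← intervalIntegral.integral_of_le hρD.le]
  rw [h2]
  simp only [nsmul_eq_mul, smul_eq_mul]
  ring

private lemma law_int' (D ρ l m c : ℝ) (hD : 0 < D) (hρ0 : 0 ≤ ρ) (hρD : ρ < D)
    (hl : 0 < l) (hm : 0 < m) (hc : 0 < c)
    {Ω : Type*} [MeasureSpace Ω] [IsProbabilityMeasure (ℙ : Measure Ω)]
    (X : Ω → EuclideanSpace ℝ (Fin 2)) (hX : Measurable X)
    (hlaw : Measure.map X (ℙ : Measure Ω) =
      (volume (closedBall (0 : EuclideanSpace ℝ (Fin 2)) D \ ball 0 ρ))⁻¹ •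
        volume.restrict (closedBall (0 : EuclideanSpace ℝ (Fin 2)) D \ ball 0 ρ))
    (g : ℝ → ℝ) (hg : Continuous g) :
    ∫ ω, g (c * (‖X ω‖ ^ 2 + l ^ 2) ^ (-(m + 3) / 2)) ∂(ℙ : Measure Ω)
      = ∫ x in (c * (D ^ 2 + l ^ 2) ^ (-(m + 3) / 2))..(c * (ρ ^ 2 + l ^ 2) ^ (-(m + 3) / 2)),
          g x * ((2 / ((m + 3) * (D ^ 2 - ρ ^ 2)) * c ^ (2 / (m + 3))) * x ^ (-2 / (m + 3) - 1)) := by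
  have hm3 : (0:ℝ) < m + 3 := by linarith
  have hD2 : (0:ℝ) < D ^ 2 - ρ ^ 2 := by nlinarith
  have hGcont : Continuous fun u : EuclideanSpace ℝ (Fin 2) =>
      g (c * (‖u‖ ^ 2 + l ^ 2) ^ (-(m + 3) / 2)) := by
    apply hg.comp
    apply Continuous.mul continuous_const
    apply Continuous.rpow_const (by fun_prop)
    intro u; exact Or.inl (by positivity)
  have step1 : ∫ ω, g (c * (‖X ω‖ ^ 2 + l ^ 2) ^ (-(m + 3) / 2)) ∂(ℙ : Measure Ω)
      = ∫ u, g (c * (‖u‖ ^ 2 + l ^ 2) ^ (-(m + 3) / 2)) ∂(Measure.map X ℙ) := by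
    rw [MeasureTheory.integral_map hX.aemeasurable hGcont.aestronglyMeasurable]
  rw [step1, hlaw, MeasureTheory.integral_smul_measure, annulus_volume' D ρ hD hρ0 hρD,
    polar' D ρ l m c hρ0 hρD, subst_lemma' l m c ρ D hl hm hc hρ0 hρD g hg]
  rw [← intervalIntegral.integral_const_mul]
  have hπ : (0:ℝ) < Real.pi * (D ^ 2 - ρ ^ 2) := by positivity
  rw [ENNReal.toReal_inv, ENNReal.toReal_ofReal hπ.le]
  rw [smul_eq_mul, ← mul_assoc, ← mul_assoc, ← intervalIntegral.integral_const_mul]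
  apply intervalIntegral.integral_congr
  intro x _
  have hπ' : Real.pi ≠ 0 := Real.pi_ne_zero
  field_simp

set_option maxHeartbeats 2000000 in
/-- Equation (19), case 5: if `χ ≥ v_mid/v_min`, then `χ·H_B ≥ H_E` almost surely, and the
average secrecy capacity `E[C_s]` equals `E[(1/2)·ln((1 + a·H_B²)/(1 + b·H_E²))]`, i.e. the
double integral
`∫_{v_min}^{v_max} ∫_{v_min}^{v_mid} (1/2)·ln((1+ax²)/(1+by²))·f_{H_B}(x)·f_{H_E}(y) dy dx`. -/
theorem asc_case_five
    (D ρ l m c : ℝ) (hD : 0 < D) (hρ0 : 0 ≤ ρ) (hρD : ρ < D) (hl : 0 < l) (hm : 0 < m)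
    (hc : 0 < c)
    (vmin vmid vmax : ℝ)
    (hvmin : vmin = c * (D ^ 2 + l ^ 2) ^ (-(m + 3) / 2))
    (hvmid : vmid = c * (ρ ^ 2 + l ^ 2) ^ (-(m + 3) / 2))
    (hvmax : vmax = c * l ^ (-(m + 3)))
    (a b : ℝ) (ha : 0 < a) (hb : 0 < b)
    {Ω : Type*} [MeasureSpace Ω] [IsProbabilityMeasure (ℙ : Measure Ω)]
    (U W : Ω → EuclideanSpace ℝ (Fin 2)) (hU : Measurable U) (hW : Measurable W)
    (hUlaw : Measure.map U (ℙ : Measure Ω) =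
      (volume (Metric.closedBall (0 : EuclideanSpace ℝ (Fin 2)) D))⁻¹ •
        volume.restrict (Metric.closedBall (0 : EuclideanSpace ℝ (Fin 2)) D))
    (hWlaw : Measure.map W (ℙ : Measure Ω) =
      (volume (Metric.closedBall (0 : EuclideanSpace ℝ (Fin 2)) D \
          Metric.ball (0 : EuclideanSpace ℝ (Fin 2)) ρ))⁻¹ •
        volume.restrict (Metric.closedBall (0 : EuclideanSpace ℝ (Fin 2)) D \
          Metric.ball (0 : EuclideanSpace ℝ (Fin 2)) ρ))
    (hindep : IndepFun U W (ℙ : Measure Ω))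
    (HB HE : Ω → ℝ)
    (hHB : ∀ ω, HB ω = c * (‖U ω‖ ^ 2 + l ^ 2) ^ (-(m + 3) / 2))
    (hHE : ∀ ω, HE ω = c * (‖W ω‖ ^ 2 + l ^ 2) ^ (-(m + 3) / 2))
    (Ξ₁ Ξ₂ : ℝ)
    (hΞ₁ : Ξ₁ = 2 / ((m + 3) * D ^ 2) * c ^ (2 / (m + 3)))
    (hΞ₂ : Ξ₂ = 2 / ((m + 3) * (D ^ 2 - ρ ^ 2)) * c ^ (2 / (m + 3)))
    (χ : ℝ) (hχ : χ = Real.sqrt (a / b))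
    (Cs : Ω → ℝ)
    (hCs : ∀ ω, Cs ω =
      if HE ω ≤ χ * HB ω then
        1 / 2 * Real.log ((1 + a * HB ω ^ 2) / (1 + b * HE ω ^ 2))
      else 0)
    (hcase : vmid / vmin ≤ χ) :
    (∀ᵐ ω ∂(ℙ : Measure Ω), HE ω ≤ χ * HB ω) ∧
      (∫ ω, Cs ω ∂(ℙ : Measure Ω) =
        ∫ ω, 1 / 2 * Real.log ((1 + a * HB ω ^ 2) / (1 + b * HE ω ^ 2))
          ∂(ℙ : Measure Ω)) ∧
      (∫ ω, Cs ω ∂(ℙ : Measure Ω) =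
        ∫ x in vmin..vmax, ∫ y in vmin..vmid,
          1 / 2 * Real.log ((1 + a * x ^ 2) / (1 + b * y ^ 2)) *
            (Ξ₁ * x ^ (-2 / (m + 3) - 1)) * (Ξ₂ * y ^ (-2 / (m + 3) - 1))) := by
  have hm3 : (0:ℝ) < m + 3 := by linarith
  have hvminpos : 0 < vmin := by
    rw [hvmin]; exact mul_pos hc (Real.rpow_pos_of_pos (by positivity) _)
  have hvmidpos : 0 < vmid := by
    rw [hvmid]; exact mul_pos hc (Real.rpow_pos_of_pos (by positivity) _)
  have hχ0 : 0 ≤ χ := hχ ▸ Real.sqrt_nonneg _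
  -- HB/HE pointwise bounds
  have hBpos : ∀ ω, 0 < HB ω := fun ω => by
    rw [hHB ω]; exact mul_pos hc (Real.rpow_pos_of_pos (by positivity) _)
  have hEpos : ∀ ω, 0 < HE ω := fun ω => by
    rw [hHE ω]; exact mul_pos hc (Real.rpow_pos_of_pos (by positivity) _)
  have hl2 : (l:ℝ) ^ 2 = l ^ ((2:ℕ):ℝ) := (Real.rpow_natCast l 2).symm
  have hvmax_eq : vmax = c * ((0:ℝ) ^ 2 + l ^ 2) ^ (-(m + 3) / 2) := by
    rw [hvmax]
    congr 1
    rw [show (0:ℝ) ^ 2 + l ^ 2 = l ^ 2 by ring, hl2, ← Real.rpow_mul hl.le]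
    norm_num
    rw [show 2 * ((-3 + -m) / 2) = -3 + -m by ring]
  have hBmax : ∀ ω, HB ω ≤ vmax := fun ω => by
    rw [hHB ω, hvmax_eq]
    apply mul_le_mul_of_nonneg_left _ hc.le
    apply Real.rpow_le_rpow_of_nonpos (by positivity) (by nlinarith [sq_nonneg ‖U ω‖])
      (by linarith)
  have hEmax : ∀ ω, HE ω ≤ vmax := fun ω => by
    rw [hHE ω, hvmax_eq]
    apply mul_le_mul_of_nonneg_left _ hc.le
    apply Real.rpow_le_rpow_of_nonpos (by positivity) (by nlinarith [sq_nonneg ‖W ω‖])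
      (by linarith)
  -- almost sure position bounds
  have hUball : ∀ᵐ ω ∂(ℙ : Measure Ω), ‖U ω‖ ≤ D := by
    rw [ae_iff]
    have hset : {ω | ¬ ‖U ω‖ ≤ D}
        = U ⁻¹' (Metric.closedBall (0 : EuclideanSpace ℝ (Fin 2)) D)ᶜ := by
      ext ω; simp [mem_closedBall_zero_iff]
    rw [hset, ← Measure.map_apply hU measurableSet_closedBall.compl, hUlaw,
      Measure.smul_apply, Measure.restrict_apply measurableSet_closedBall.compl]
    simp
  have hWball : ∀ᵐ ω ∂(ℙ : Measure Ω), ρ ≤ ‖W ω‖ := by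
    rw [ae_iff]
    have hset : {ω | ¬ ρ ≤ ‖W ω‖}
        ⊆ W ⁻¹' (Metric.closedBall (0 : EuclideanSpace ℝ (Fin 2)) D \
            Metric.ball (0 : EuclideanSpace ℝ (Fin 2)) ρ)ᶜ := by
      intro ω hω
      simp only [mem_setOf_eq, not_le] at hω
      simp only [Set.mem_preimage, Set.mem_compl_iff, Set.mem_diff, not_and, not_not]
      intro _
      simpa [mem_ball_zero_iff] using hω
    refine measure_mono_null hset ?_
    have hmeas : MeasurableSet (Metric.closedBall (0 : EuclideanSpace ℝ (Fin 2)) D \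
        Metric.ball (0 : EuclideanSpace ℝ (Fin 2)) ρ) :=
      measurableSet_closedBall.diff measurableSet_ball
    rw [← Measure.map_apply hW hmeas.compl, hWlaw,
      Measure.smul_apply, Measure.restrict_apply hmeas.compl]
    simp
  -- first conjunct
  have conj1 : ∀ᵐ ω ∂(ℙ : Measure Ω), HE ω ≤ χ * HB ω := by
    filter_upwards [hUball, hWball] with ω h1 h2
    have hBmin : vmin ≤ HB ω := by
      rw [hHB ω, hvmin]
      apply mul_le_mul_of_nonneg_left _ hc.le
      apply Real.rpow_le_rpow_of_nonpos (by positivity)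
        (by nlinarith [norm_nonneg (U ω)]) (by linarith)
    have hEmid : HE ω ≤ vmid := by
      rw [hHE ω, hvmid]
      apply mul_le_mul_of_nonneg_left _ hc.le
      apply Real.rpow_le_rpow_of_nonpos (by positivity)
        (by nlinarith [norm_nonneg (W ω)]) (by linarith)
    calc HE ω ≤ vmid := hEmid
      _ ≤ χ * vmin := (div_le_iff₀ hvminpos).mp hcase
      _ ≤ χ * HB ω := mul_le_mul_of_nonneg_left hBmin hχ0
  refine ⟨conj1, ?_, ?_⟩
  · apply MeasureTheory.integral_congr_ae
    filter_upwards [conj1] with ω h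
    rw [hCs ω, if_pos h]
  -- third conjunct
  · have hE := fun ω => hEpos ω
    -- laws
    have hUlaw' : Measure.map U (ℙ : Measure Ω) =
        (volume (Metric.closedBall (0 : EuclideanSpace ℝ (Fin 2)) D \
            Metric.ball (0 : EuclideanSpace ℝ (Fin 2)) 0))⁻¹ •
          volume.restrict (Metric.closedBall (0 : EuclideanSpace ℝ (Fin 2)) D \
            Metric.ball (0 : EuclideanSpace ℝ (Fin 2)) 0) := by
      rw [Metric.ball_zero, diff_empty]; exact hUlaw
    have lawB : ∀ g : ℝ → ℝ, Continuous g →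
        ∫ ω, g (HB ω) ∂(ℙ : Measure Ω)
          = ∫ x in vmin..vmax, g x * (Ξ₁ * x ^ (-2 / (m + 3) - 1)) := by
      intro g hg
      have h := law_int' D 0 l m c hD le_rfl hD hl hm hc U hU hUlaw' g hg
      simp only [hHB]
      rw [h, ← hvmin, ← hvmax_eq]
      apply intervalIntegral.integral_congr
      intro x _
      rw [hΞ₁]
      norm_num
    have lawE : ∀ g : ℝ → ℝ, Continuous g →
        ∫ ω, g (HE ω) ∂(ℙ : Measure Ω)
          = ∫ y in vmin..vmid, g y * (Ξ₂ * y ^ (-2 / (m + 3) - 1)) := by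
      intro g hg
      have h := law_int' D ρ l m c hD hρ0 hρD hl hm hc W hW hWlaw g hg
      simp only [hHE]
      rw [h, ← hvmin, ← hvmid, ← hΞ₂]
    have hFc : Continuous fun x : ℝ => 1 / 2 * Real.log (1 + a * x ^ 2) :=
      continuous_const.mul ((by fun_prop : Continuous fun x : ℝ => 1 + a * x ^ 2).log
        (fun x => by positivity))
    have hGc : Continuous fun y : ℝ => 1 / 2 * Real.log (1 + b * y ^ 2) :=
      continuous_const.mul ((by fun_prop : Continuous fun y : ℝ => 1 + b * y ^ 2).log
        (fun y => by positivity))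
    have hcontB : Continuous fun u : EuclideanSpace ℝ (Fin 2) =>
        c * (‖u‖ ^ 2 + l ^ 2) ^ (-(m + 3) / 2) := by
      apply continuous_const.mul
      apply Continuous.rpow_const (by fun_prop)
      intro u; exact Or.inl (by positivity)
    have mHB : Measurable HB := by
      have : HB = (fun u : EuclideanSpace ℝ (Fin 2) =>
          c * (‖u‖ ^ 2 + l ^ 2) ^ (-(m + 3) / 2)) ∘ U := funext hHB
      rw [this]; exact hcontB.measurable.comp hU
    have mHE : Measurable HE := by
      have : HE = (fun u : EuclideanSpace ℝ (Fin 2) =>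
          c * (‖u‖ ^ 2 + l ^ 2) ^ (-(m + 3) / 2)) ∘ W := funext hHE
      rw [this]; exact hcontB.measurable.comp hW
    have hint : ∀ (H : Ω → ℝ) (t : ℝ), Measurable H → (0 < t) → (∀ ω, 0 < H ω) →
        (∀ ω, H ω ≤ vmax) →
        Integrable (fun ω => 1 / 2 * Real.log (1 + t * H ω ^ 2)) (ℙ : Measure Ω) := by
      intro H t mH ht hpos hle
      have hc' : Continuous fun x : ℝ => 1 / 2 * Real.log (1 + t * x ^ 2) :=
        continuous_const.mul ((by fun_prop : Continuous fun x : ℝ => 1 + t * x ^ 2).log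
          (fun x => by positivity))
      apply (integrable_const ((1:ℝ) / 2 * Real.log (1 + t * vmax ^ 2))).mono'
      · exact (hc'.measurable.comp mH).aestronglyMeasurable
      · filter_upwards with ω
        rw [Real.norm_eq_abs, abs_of_nonneg]
        · apply mul_le_mul_of_nonneg_left _ (by norm_num : (0:ℝ) ≤ 1 / 2)
          apply Real.log_le_log (by positivity)
          have h1 : H ω ^ 2 ≤ vmax ^ 2 := pow_le_pow_left₀ (hpos ω).le (hle ω) 2
          nlinarith
        · apply mul_nonneg (by norm_num)
          exact Real.log_nonneg (by nlinarith [sq_nonneg (H ω)])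
    have intF : Integrable (fun ω => 1 / 2 * Real.log (1 + a * HB ω ^ 2)) (ℙ : Measure Ω) :=
      hint HB a mHB ha hBpos hBmax
    have intG : Integrable (fun ω => 1 / 2 * Real.log (1 + b * HE ω ^ 2)) (ℙ : Measure Ω) :=
      hint HE b mHE hb hEpos hEmax
    have intEq : ∫ ω, Cs ω ∂(ℙ : Measure Ω)
        = (∫ ω, 1 / 2 * Real.log (1 + a * HB ω ^ 2) ∂(ℙ : Measure Ω))
          - ∫ ω, 1 / 2 * Real.log (1 + b * HE ω ^ 2) ∂(ℙ : Measure Ω) := by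
      rw [← MeasureTheory.integral_sub intF intG]
      apply MeasureTheory.integral_congr_ae
      filter_upwards [conj1] with ω h
      rw [hCs ω, if_pos h]
      have h1 : (0:ℝ) < 1 + a * HB ω ^ 2 := by positivity
      have h2 : (0:ℝ) < 1 + b * HE ω ^ 2 := by positivity
      rw [Real.log_div h1.ne' h2.ne']
      ring
    have hvmaxpos : 0 < vmax := by
      rw [hvmax]; exact mul_pos hc (Real.rpow_pos_of_pos hl _)
    -- interval continuity facts
    have hposOn : ∀ {p q : ℝ}, 0 < p → 0 < q → ∀ x ∈ uIcc p q, (0:ℝ) < x := by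
      intro p q hp hq x hx
      rcases mem_uIcc.mp hx with ⟨h1, _⟩ | ⟨h1, _⟩
      · exact lt_of_lt_of_le hp h1
      · exact lt_of_lt_of_le hq h1
    have hrpowOn : ∀ {p q : ℝ}, 0 < p → 0 < q →
        ContinuousOn (fun x : ℝ => x ^ (-2 / (m + 3) - 1)) (uIcc p q) := by
      intro p q hp hq x hx
      exact (Real.continuousAt_rpow_const x _
        (Or.inl (ne_of_gt (hposOn hp hq x hx)))).continuousWithinAt
    have hfBcont : ContinuousOn (fun x : ℝ => Ξ₁ * x ^ (-2 / (m + 3) - 1)) (uIcc vmin vmax) :=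
      continuousOn_const.mul (hrpowOn hvminpos hvmaxpos)
    have hfEcont : ContinuousOn (fun y : ℝ => Ξ₂ * y ^ (-2 / (m + 3) - 1)) (uIcc vmin vmid) :=
      continuousOn_const.mul (hrpowOn hvminpos hvmidpos)
    have intfB : IntervalIntegrable (fun x : ℝ => Ξ₁ * x ^ (-2 / (m + 3) - 1))
        volume vmin vmax := hfBcont.intervalIntegrable
    have intfE : IntervalIntegrable (fun y : ℝ => Ξ₂ * y ^ (-2 / (m + 3) - 1))
        volume vmin vmid := hfEcont.intervalIntegrable
    have intFfB : IntervalIntegrable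
        (fun x : ℝ => 1 / 2 * Real.log (1 + a * x ^ 2) * (Ξ₁ * x ^ (-2 / (m + 3) - 1)))
        volume vmin vmax := (hFc.continuousOn.mul hfBcont).intervalIntegrable
    have intGfE : IntervalIntegrable
        (fun y : ℝ => 1 / 2 * Real.log (1 + b * y ^ 2) * (Ξ₂ * y ^ (-2 / (m + 3) - 1)))
        volume vmin vmid := (hGc.continuousOn.mul hfEcont).intervalIntegrable
    -- total mass one
    have hfB1 : ∫ x in vmin..vmax, Ξ₁ * x ^ (-2 / (m + 3) - 1) = 1 := by
      have h := lawB (fun _ => (1:ℝ)) continuous_const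
      simp only [one_mul] at h
      rw [← h]
      simp
    have hfE1 : ∫ y in vmin..vmid, Ξ₂ * y ^ (-2 / (m + 3) - 1) = 1 := by
      have h := lawE (fun _ => (1:ℝ)) continuous_const
      simp only [one_mul] at h
      rw [← h]
      simp
    have e3 := lawB (fun x : ℝ => 1 / 2 * Real.log (1 + a * x ^ 2)) hFc
    have e4 := lawE (fun y : ℝ => 1 / 2 * Real.log (1 + b * y ^ 2)) hGc
    rw [intEq, e3, e4]
    set K : ℝ := ∫ y in vmin..vmid,
      1 / 2 * Real.log (1 + b * y ^ 2) * (Ξ₂ * y ^ (-2 / (m + 3) - 1)) with hK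
    symm
    have inner : ∀ x : ℝ,
        (∫ y in vmin..vmid,
          1 / 2 * Real.log ((1 + a * x ^ 2) / (1 + b * y ^ 2)) *
            (Ξ₁ * x ^ (-2 / (m + 3) - 1)) * (Ξ₂ * y ^ (-2 / (m + 3) - 1)))
        = 1 / 2 * Real.log (1 + a * x ^ 2) * (Ξ₁ * x ^ (-2 / (m + 3) - 1))
          - (Ξ₁ * x ^ (-2 / (m + 3) - 1)) * K := by
      intro x
      have e1 : ∀ y ∈ uIcc vmin vmid,
          1 / 2 * Real.log ((1 + a * x ^ 2) / (1 + b * y ^ 2)) *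
            (Ξ₁ * x ^ (-2 / (m + 3) - 1)) * (Ξ₂ * y ^ (-2 / (m + 3) - 1))
          = (1 / 2 * Real.log (1 + a * x ^ 2) * (Ξ₁ * x ^ (-2 / (m + 3) - 1))) *
              (Ξ₂ * y ^ (-2 / (m + 3) - 1))
            - (Ξ₁ * x ^ (-2 / (m + 3) - 1)) *
              (1 / 2 * Real.log (1 + b * y ^ 2) * (Ξ₂ * y ^ (-2 / (m + 3) - 1))) := by
        intro y _
        have h1 : (0:ℝ) < 1 + a * x ^ 2 := by positivity
        have h2 : (0:ℝ) < 1 + b * y ^ 2 := by positivity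
        rw [Real.log_div h1.ne' h2.ne']
        ring
      have p1 : (∫ y in vmin..vmid,
            (1 / 2 * Real.log (1 + a * x ^ 2) * (Ξ₁ * x ^ (-2 / (m + 3) - 1))) *
              (Ξ₂ * y ^ (-2 / (m + 3) - 1)))
          = (1 / 2 * Real.log (1 + a * x ^ 2) * (Ξ₁ * x ^ (-2 / (m + 3) - 1))) *
              ∫ y in vmin..vmid, Ξ₂ * y ^ (-2 / (m + 3) - 1) :=
        intervalIntegral.integral_const_mul _ _
      have p2 : (∫ y in vmin..vmid,
            (Ξ₁ * x ^ (-2 / (m + 3) - 1)) *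
              (1 / 2 * Real.log (1 + b * y ^ 2) * (Ξ₂ * y ^ (-2 / (m + 3) - 1))))
          = (Ξ₁ * x ^ (-2 / (m + 3) - 1)) * K :=
        intervalIntegral.integral_const_mul _ _
      rw [intervalIntegral.integral_congr e1,
        intervalIntegral.integral_sub (intfE.const_mul _) (intGfE.const_mul _), p1, p2, hfE1]
      ring
    calc (∫ x in vmin..vmax, ∫ y in vmin..vmid,
          1 / 2 * Real.log ((1 + a * x ^ 2) / (1 + b * y ^ 2)) *
            (Ξ₁ * x ^ (-2 / (m + 3) - 1)) * (Ξ₂ * y ^ (-2 / (m + 3) - 1)))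
        = ∫ x in vmin..vmax,
            (1 / 2 * Real.log (1 + a * x ^ 2) * (Ξ₁ * x ^ (-2 / (m + 3) - 1))
              - (Ξ₁ * x ^ (-2 / (m + 3) - 1)) * K) :=
          intervalIntegral.integral_congr (fun x _ => inner x)
      _ = (∫ x in vmin..vmax,
            1 / 2 * Real.log (1 + a * x ^ 2) * (Ξ₁ * x ^ (-2 / (m + 3) - 1)))
          - (∫ x in vmin..vmax, Ξ₁ * x ^ (-2 / (m + 3) - 1)) * K := by
          rw [intervalIntegral.integral_sub intFfB (intfB.mul_const K),
            intervalIntegral.integral_mul_const]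
      _ = (∫ x in vmin..vmax,
            1 / 2 * Real.log (1 + a * x ^ 2) * (Ξ₁ * x ^ (-2 / (m + 3) - 1))) - K := by
          rw [hfB1, one_mul]
end
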